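/- arXiv:2003.05890 — 6 statements merged into one kernel-verified Lean document; each statement's English description precedes it below -/
import Mathlib

section
/- (Lemma 3.4, 'Q-Lemma') A (c,c)-dimensional framed representation (A₁,A₂;B₁,…,B_{n−1};D₂,…,D_n;e;f₁,…,f_{n−1}) of Λ'_n is θ_c-semistable if and only if it satisfies both of the following conditions: (Q2') for every subrepresentation (S₀,S₁) with S₀ ⊆ ker e one has dim S₀ ≤ dim S₁, and if dim S₀ = dim S₁ then S₀ = 0 and S₁ = 0; (Q3') for every subrepresentation (S₀,S₁) with Im f_q ⊆ S₀ for all q = 1,…,n−1 one has dim S₀ ≤ dim S₁. -/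
open Module

/-- (Lemma 3.4, 'Q-Lemma') A (c,c)-dimensional framed representation of Λ'_n is
θ_c-semistable if and only if it satisfies conditions (Q2') and (Q3'). -/
theorem stmt_0 (n c : ℕ) (hn : 2 ≤ n) (hc : 1 ≤ c)
    (V₀ V₁ W : Type) [AddCommGroup V₀] [Module ℂ V₀] [FiniteDimensional ℂ V₀]
    [AddCommGroup V₁] [Module ℂ V₁] [FiniteDimensional ℂ V₁]
    [AddCommGroup W] [Module ℂ W] [FiniteDimensional ℂ W]
    (hV₀ : finrank ℂ V₀ = c) (hV₁ : finrank ℂ V₁ = c) (hW : finrank ℂ W = 1)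
    (A₁ A₂ : V₀ →ₗ[ℂ] V₁)
    (B D : Fin (n - 1) → (V₁ →ₗ[ℂ] V₀))
    (e : V₀ →ₗ[ℂ] W) (f : Fin (n - 1) → (W →ₗ[ℂ] V₀))
    (hQ1'a : ∀ q, A₂ ∘ₗ D q = A₁ ∘ₗ B q)
    (hQ1'b : ∀ q, D q ∘ₗ A₂ = B q ∘ₗ A₁ + f q ∘ₗ e) :
    -- θ_c-semistability
    (∀ (S₀ : Submodule ℂ V₀) (S₁ : Submodule ℂ V₁),
      S₀.map A₁ ≤ S₁ → S₀.map A₂ ≤ S₁ →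
      (∀ q, S₁.map (B q) ≤ S₀) → (∀ q, S₁.map (D q) ≤ S₀) →
      ((S₀ ≤ LinearMap.ker e →
          (2 * c : ℤ) * (finrank ℂ S₀ : ℤ) + (1 - 2 * c) * (finrank ℂ S₁ : ℤ) ≤ 0) ∧
       ((∀ q, LinearMap.range (f q) ≤ S₀) →
          (2 * c : ℤ) * (finrank ℂ S₀ : ℤ) + (1 - 2 * c) * (finrank ℂ S₁ : ℤ) ≤ c)))
    ↔
    -- (Q2')
    ((∀ (S₀ : Submodule ℂ V₀) (S₁ : Submodule ℂ V₁),
      S₀.map A₁ ≤ S₁ → S₀.map A₂ ≤ S₁ →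
      (∀ q, S₁.map (B q) ≤ S₀) → (∀ q, S₁.map (D q) ≤ S₀) →
      S₀ ≤ LinearMap.ker e →
      finrank ℂ S₀ ≤ finrank ℂ S₁ ∧
        (finrank ℂ S₀ = finrank ℂ S₁ → S₀ = ⊥ ∧ S₁ = ⊥)) ∧
    -- (Q3')
    (∀ (S₀ : Submodule ℂ V₀) (S₁ : Submodule ℂ V₁),
      S₀.map A₁ ≤ S₁ → S₀.map A₂ ≤ S₁ →
      (∀ q, S₁.map (B q) ≤ S₀) → (∀ q, S₁.map (D q) ≤ S₀) →
      (∀ q, LinearMap.range (f q) ≤ S₀) →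
      finrank ℂ S₀ ≤ finrank ℂ S₁)) := by
  have hc' : (1 : ℤ) ≤ (c : ℤ) := by exact_mod_cast hc
  constructor
  · intro hss
    constructor
    · intro S₀ S₁ h1 h2 h3 h4 he
      have hi := (hss S₀ S₁ h1 h2 h3 h4).1 he
      have hb : (finrank ℂ S₁ : ℤ) ≤ (c : ℤ) := by
        exact_mod_cast hV₁ ▸ Submodule.finrank_le S₁
      have hab : (finrank ℂ S₀ : ℤ) ≤ (finrank ℂ S₁ : ℤ) := by nlinarith
      constructor
      · exact_mod_cast hab
      · intro heq
        have ha0 : (finrank ℂ S₀ : ℤ) ≤ 0 := by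
          have : (finrank ℂ S₀ : ℤ) = (finrank ℂ S₁ : ℤ) := by exact_mod_cast heq
          nlinarith
        have ha : finrank ℂ S₀ = 0 := by omega
        have hb0 : finrank ℂ S₁ = 0 := by omega
        exact ⟨Submodule.finrank_eq_zero.mp ha, Submodule.finrank_eq_zero.mp hb0⟩
    · intro S₀ S₁ h1 h2 h3 h4 hf
      have hi := (hss S₀ S₁ h1 h2 h3 h4).2 hf
      have hb : (finrank ℂ S₁ : ℤ) ≤ (c : ℤ) := by
        exact_mod_cast hV₁ ▸ Submodule.finrank_le S₁
      have : (finrank ℂ S₀ : ℤ) ≤ (finrank ℂ S₁ : ℤ) := by nlinarith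
      exact_mod_cast this
  · intro ⟨hQ2, hQ3⟩ S₀ S₁ h1 h2 h3 h4
    have hb : (finrank ℂ S₁ : ℤ) ≤ (c : ℤ) := by
      exact_mod_cast hV₁ ▸ Submodule.finrank_le S₁
    constructor
    · intro he
      obtain ⟨hle, heq⟩ := hQ2 S₀ S₁ h1 h2 h3 h4 he
      rcases eq_or_lt_of_le hle with h | h
      · obtain ⟨e0, e1⟩ := heq h
        rw [e0, e1]; simp [finrank_bot]
      · have h' : (finrank ℂ S₀ : ℤ) + 1 ≤ (finrank ℂ S₁ : ℤ) := by exact_mod_cast h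
        nlinarith
    · intro hf
      have hle := hQ3 S₀ S₁ h1 h2 h3 h4 hf
      have h' : (finrank ℂ S₀ : ℤ) ≤ (finrank ℂ S₁ : ℤ) := by exact_mod_cast hle
      nlinarith
end

section
/- (Proposition 3.5) For every θ_c-semistable (c,c)-dimensional framed representation (A₁,A₂;B₁,…,B_{n−1};D₂,…,D_n;e;f₁,…,f_{n−1}) of Λ'_n, the associated matrix pencil A₁ + λA₂ is regular, i.e., there exist ν₁, ν₂ ∈ ℂ such that the linear map ν₁A₁ + ν₂A₂ : V₀ → V₁ is bijective. -/
open Module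

namespace Prop35

open Polynomial

variable {V₀ V₁ W : Type} [AddCommGroup V₀] [Module ℂ V₀] [AddCommGroup V₁] [Module ℂ V₁]
  [AddCommGroup W] [Module ℂ W]

theorem main5 [FiniteDimensional ℂ V₀] [FiniteDimensional ℂ V₁] [FiniteDimensional ℂ W]
    {ι : Type*} (c : ℕ) (hc : 1 ≤ c)
    (A₁ A₂ : V₀ →ₗ[ℂ] V₁) (B D : ι → V₁ →ₗ[ℂ] V₀)
    (e : V₀ →ₗ[ℂ] W) (f : ι → W →ₗ[ℂ] V₀)
    (hW : finrank ℂ W = 1)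
    (hrel1 : ∀ q y, A₂ (D q y) = A₁ (B q y))
    (hrel2 : ∀ q x, D q (A₂ x) = B q (A₁ x) + f q (e x))
    (hstab : ∀ (S₀ : Submodule ℂ V₀) (S₁ : Submodule ℂ V₁),
      S₀.map A₁ ≤ S₁ → S₀.map A₂ ≤ S₁ →
      (∀ q, S₁.map (B q) ≤ S₀) → (∀ q, S₁.map (D q) ≤ S₀) →
      (∀ q, LinearMap.range (f q) ≤ S₀) →
      (2 * c : ℤ) * (finrank ℂ S₀ : ℤ) + (1 - 2 * c) * (finrank ℂ S₁ : ℤ) ≤ c)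
    (u : ℕ → V₀) (hu0 : A₂ (u 0) = 0) (he : e (u 0) ≠ 0)
    (hchain : ∀ j, A₁ (u j) = A₂ (u (j + 1))) : False := by
  classical
  set Sm : Submodule ℂ V₀ :=
    ⨆ S : {S : Submodule ℂ V₀ // S.map A₁ ≤ S.map A₂}, (S : Submodule ℂ V₀) with hSmdef
  have hbeta : Sm.map A₁ ≤ Sm.map A₂ := by
    rw [hSmdef, Submodule.map_iSup, Submodule.map_iSup]
    exact iSup_mono fun S => S.2
  have hmax : ∀ T : Submodule ℂ V₀, T.map A₁ ≤ T.map A₂ → T ≤ Sm := fun T hT =>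
    le_iSup (fun S : {S : Submodule ℂ V₀ // S.map A₁ ≤ S.map A₂} => (S : Submodule ℂ V₀)) ⟨T, hT⟩
  have hu_mem : ∀ j, u j ∈ Sm := by
    have hUc : (Submodule.span ℂ (Set.range u)).map A₁ ≤ (Submodule.span ℂ (Set.range u)).map A₂ := by
      rw [Submodule.map_span, Submodule.map_span]
      refine Submodule.span_le.2 ?_
      rintro _ ⟨_, ⟨j, rfl⟩, rfl⟩
      rw [hchain j]
      exact Submodule.subset_span ⟨u (j + 1), ⟨j + 1, rfl⟩, rfl⟩
    exact fun j => hmax _ hUc (Submodule.subset_span ⟨j, rfl⟩)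
  -- every element of W is a multiple of `e (u 0)`
  have hWdec : ∀ w : W, ∃ k : ℂ, w = k • e (u 0) := by
    have hWspan : (Submodule.span ℂ {e (u 0)} : Submodule ℂ W) = ⊤ :=
      Submodule.eq_top_of_finrank_eq (by rw [finrank_span_singleton he, hW])
    intro w
    obtain ⟨k, hk⟩ := Submodule.mem_span_singleton.1 (hWspan ▸ Submodule.mem_top (x := w))
    exact ⟨k, hk.symm⟩
  -- the f's in terms of the chain
  have hfe0 : ∀ q, f q (e (u 0)) = -(B q (A₂ (u 1))) := by
    intro q
    have h2 := hrel2 q (u 0)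
    rw [hu0, map_zero, hchain 0] at h2
    exact eq_neg_of_add_eq_zero_right h2.symm
  set Y : Submodule ℂ V₁ := Sm.map A₂ with hYdef
  set X : Submodule ℂ V₀ :=
    ⨆ q, (Y.map (B q) ⊔ Y.map (D q) ⊔ LinearMap.range (f q)) with hXdef
  -- a useful membership
  have hDmem : ∀ q (x : V₀), x ∈ Sm → D q (A₂ x) ∈ X := by
    intro q x hx
    refine le_iSup (fun q => Y.map (B q) ⊔ Y.map (D q) ⊔ LinearMap.range (f q)) q ?_
    exact le_sup_left (a := Y.map (B q) ⊔ Y.map (D q)) (Submodule.mem_sup_right ⟨A₂ x, ⟨x, hx, rfl⟩, rfl⟩)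
  have hXT : X ≤ Sm ⊔ X := le_sup_right
  have hSmT : Sm ≤ Sm ⊔ X := le_sup_left
  -- the f-image computation
  have hfim : ∀ q (w : W), ∃ t ∈ Sm ⊔ X, A₁ (f q w) = A₂ t := by
    intro q w
    obtain ⟨k, hk⟩ := hWdec w
    refine ⟨(-k) • D q (A₂ (u 1)), Submodule.smul_mem _ _ (hXT (hDmem q (u 1) (hu_mem 1))), ?_⟩
    rw [hk, map_smul, map_smul, hfe0 q, map_neg, map_smul, hrel1 q (A₂ (u 1))]
    rw [smul_neg, neg_smul]
  -- the closure statement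
  have hTbeta : (Sm ⊔ X).map A₁ ≤ (Sm ⊔ X).map A₂ := by
    rw [Submodule.map_sup]
    apply sup_le
    · exact le_trans hbeta (le_trans (Submodule.map_mono hSmT) le_rfl)
    · rw [hXdef, Submodule.map_iSup]
      apply iSup_le; intro q
      rw [Submodule.map_sup, Submodule.map_sup]
      refine sup_le (sup_le ?_ ?_) ?_
      · -- B piece
        rintro z hz
        simp only [Submodule.mem_map] at hz
        obtain ⟨_, ⟨_, ⟨x, hx, rfl⟩, rfl⟩, rfl⟩ := hz
        refine ⟨D q (A₂ x), hXT (hDmem q x hx), (hrel1 q (A₂ x))⟩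
      · -- D piece
        rintro z hz
        simp only [Submodule.mem_map] at hz
        obtain ⟨_, ⟨_, ⟨x, hx, rfl⟩, rfl⟩, rfl⟩ := hz
        -- z = A₁ (D q (A₂ x))
        obtain ⟨x', hx', hx'eq⟩ := hbeta ⟨x, hx, rfl⟩
        -- hx'eq : A₂ x' = A₁ x
        obtain ⟨t, ht, hteq⟩ := hfim q (e x)
        refine ⟨D q (A₂ x') + t, Submodule.add_mem _ (hXT (hDmem q x' hx')) ht, ?_⟩
        rw [map_add, ← hteq, hrel2 q x, map_add, ← hx'eq, hrel1 q (A₂ x')]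
      · -- f piece
        rintro z hz
        simp only [Submodule.mem_map, LinearMap.mem_range] at hz
        obtain ⟨_, ⟨w, rfl⟩, rfl⟩ := hz
        obtain ⟨t, ht, hteq⟩ := hfim q w
        exact ⟨t, ht, hteq.symm⟩
  have hXSm : X ≤ Sm := le_trans hXT (hmax _ hTbeta)
  have hcomp : ∀ q, Y.map (B q) ⊔ Y.map (D q) ⊔ LinearMap.range (f q) ≤ Sm :=
    fun q => le_trans (le_iSup (fun q => Y.map (B q) ⊔ Y.map (D q) ⊔ LinearMap.range (f q)) q) hXSm
  have hB : ∀ q, Y.map (B q) ≤ Sm := fun q => le_trans (le_sup_left.trans le_sup_left) (hcomp q)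
  have hD : ∀ q, Y.map (D q) ≤ Sm := fun q => le_trans (le_sup_right.trans le_sup_left) (hcomp q)
  have hf : ∀ q, LinearMap.range (f q) ≤ Sm := fun q => le_trans le_sup_right (hcomp q)
  have happ := hstab Sm Y hbeta le_rfl hB hD hf
  -- ranks
  have hx0 : u 0 ≠ 0 := fun h => he (by rw [h, map_zero])
  have hs1 : 1 ≤ finrank ℂ Sm := by
    calc 1 = finrank ℂ (Submodule.span ℂ {u 0}) := (finrank_span_singleton hx0).symm
    _ ≤ finrank ℂ Sm := Submodule.finrank_mono
        ((Submodule.span_singleton_le_iff_mem _ _).2 (hu_mem 0))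
  have hrank : finrank ℂ Y + 1 ≤ finrank ℂ Sm := by
    have hrn := LinearMap.finrank_range_add_finrank_ker (A₂.domRestrict Sm)
    rw [LinearMap.range_domRestrict, ← hYdef] at hrn
    have hmem : (⟨u 0, hu_mem 0⟩ : Sm) ∈ LinearMap.ker (A₂.domRestrict Sm) := by
      simp only [LinearMap.mem_ker, LinearMap.domRestrict_apply, hu0]
    have hne : (⟨u 0, hu_mem 0⟩ : Sm) ≠ 0 := by
      intro hcon
      exact hx0 (congrArg Subtype.val hcon)
    have hker : 1 ≤ finrank ℂ (LinearMap.ker (A₂.domRestrict Sm)) := by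
      calc 1 = finrank ℂ (Submodule.span ℂ {(⟨u 0, hu_mem 0⟩ : Sm)}) :=
            (finrank_span_singleton hne).symm
      _ ≤ _ := Submodule.finrank_mono ((Submodule.span_singleton_le_iff_mem _ _).2 hmem)
    omega
  have hcz : (1 : ℤ) ≤ (c : ℤ) := by exact_mod_cast hc
  have ha : (1 : ℤ) ≤ (finrank ℂ Sm : ℤ) := by exact_mod_cast hs1
  have hb : (finrank ℂ Y : ℤ) + 1 ≤ (finrank ℂ Sm : ℤ) := by exact_mod_cast hrank
  nlinarith [happ, mul_nonneg (by linarith : (0:ℤ) ≤ 2 * (c:ℤ) - 1)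
    (by linarith : (0:ℤ) ≤ (finrank ℂ Sm : ℤ) - 1 - (finrank ℂ Y : ℤ))]

theorem exists_chain [FiniteDimensional ℂ V₀] [FiniteDimensional ℂ V₁] (c : ℕ)
    (hV₀ : finrank ℂ V₀ = c) (hV₁ : finrank ℂ V₁ = c)
    (A₁ A₂ : V₀ →ₗ[ℂ] V₁)
    (hsing : ∀ τ : ℂ, ¬ Function.Bijective (A₁ + τ • A₂)) :
    ∃ w : ℕ → V₀, (∃ N, ∀ i, N ≤ i → w i = 0) ∧ A₁ (w 0) = 0 ∧
      (∀ i, A₁ (w (i + 1)) + A₂ (w i) = 0) ∧ ∃ k, w k ≠ 0 := by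
  classical
  set b₀ := Module.finBasisOfFinrankEq ℂ V₀ hV₀ with hb₀
  set b₁ := Module.finBasisOfFinrankEq ℂ V₁ hV₁ with hb₁
  set M₁ := LinearMap.toMatrix b₀ b₁ A₁ with hM₁
  set M₂ := LinearMap.toMatrix b₀ b₁ A₂ with hM₂
  set NN : Matrix (Fin c) (Fin c) (Polynomial ℂ) :=
    M₁.map Polynomial.C + (Polynomial.X : Polynomial ℂ) • M₂.map Polynomial.C with hNN
  have hNNentry : ∀ j i, NN j i = Polynomial.C (M₁ j i) + Polynomial.X * Polynomial.C (M₂ j i) := by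
    intro j i
    simp [hNN, Matrix.add_apply, Matrix.smul_apply, Matrix.map_apply, smul_eq_mul]
  have hdet : NN.det = 0 := by
    apply Polynomial.funext
    intro τ
    rw [Polynomial.eval_zero]
    have hmat : LinearMap.toMatrix b₀ b₁ (A₁ + τ • A₂) = M₁ + τ • M₂ := by
      rw [map_add, map_smul, hM₁, hM₂]
    have hmapNN : NN.map (Polynomial.evalRingHom τ) = M₁ + τ • M₂ := by
      ext j i
      rw [Matrix.map_apply, hNNentry j i]
      simp only [coe_evalRingHom, Polynomial.eval_add, Polynomial.eval_mul, Polynomial.eval_C,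
        Polynomial.eval_X, Matrix.add_apply, Matrix.smul_apply, smul_eq_mul]
    have h1 : (NN.det).eval τ = (NN.map (Polynomial.evalRingHom τ)).det := by
      have h2 := RingHom.map_det (Polynomial.evalRingHom τ) NN
      rwa [RingHom.mapMatrix_apply] at h2
    rw [h1, hmapNN, ← hmat]
    by_contra hne
    apply hsing τ
    have hun : IsUnit (LinearMap.toMatrix b₀ b₁ (A₁ + τ • A₂)).det := isUnit_iff_ne_zero.2 hne
    have hco := LinearEquiv.coe_ofIsUnitDet hun
    have hbij := (LinearEquiv.ofIsUnitDet hun).bijective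
    rw [← hco]
    exact hbij
  obtain ⟨v, hvne, hv0⟩ := Matrix.exists_mulVec_eq_zero_iff.2 hdet
  set w : ℕ → V₀ := fun k => ∑ i : Fin c, (v i).coeff k • b₀ i with hw
  have hcoeffNN : ∀ (k : ℕ) (j : Fin c), ((NN.mulVec v) j).coeff k = 0 := by
    intro k j
    rw [hv0]
    simp
  have hrow0 : ∀ j : Fin c, (∑ i : Fin c, M₁ j i * (v i).coeff 0) = 0 := by
    intro j
    have h := hcoeffNN 0 j
    rw [Matrix.mulVec, dotProduct, Polynomial.finset_sum_coeff] at h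
    rw [← h]
    apply Finset.sum_congr rfl
    intro i _
    rw [hNNentry j i, add_mul, Polynomial.coeff_add, Polynomial.coeff_C_mul, mul_assoc,
      Polynomial.mul_coeff_zero, Polynomial.coeff_X_zero, zero_mul, add_zero]
  have hrowS : ∀ (k : ℕ) (j : Fin c),
      (∑ i : Fin c, (M₁ j i * (v i).coeff (k + 1) + M₂ j i * (v i).coeff k)) = 0 := by
    intro k j
    have h := hcoeffNN (k + 1) j
    rw [Matrix.mulVec, dotProduct, Polynomial.finset_sum_coeff] at h
    rw [← h]
    apply Finset.sum_congr rfl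
    intro i _
    rw [hNNentry j i, add_mul, Polynomial.coeff_add, Polynomial.coeff_C_mul, mul_assoc,
      Polynomial.coeff_X_mul, Polynomial.coeff_C_mul]
  -- applying a linear map to w
  have happly : ∀ (P : V₀ →ₗ[ℂ] V₁) (x : Fin c → ℂ),
      P (∑ i : Fin c, x i • b₀ i) =
        ∑ j : Fin c, (∑ i : Fin c, (LinearMap.toMatrix b₀ b₁ P) j i * x i) • b₁ j := by
    intro P x
    rw [map_sum]
    have hPb : ∀ i : Fin c, P (b₀ i) = ∑ j : Fin c, (LinearMap.toMatrix b₀ b₁ P) j i • b₁ j := by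
      intro i
      conv_lhs => rw [← Basis.sum_repr b₁ (P (b₀ i))]
      apply Finset.sum_congr rfl
      intro j _
      rw [LinearMap.toMatrix_apply]
    calc (∑ i : Fin c, P (x i • b₀ i))
        = ∑ i : Fin c, ∑ j : Fin c, (x i * (LinearMap.toMatrix b₀ b₁ P) j i) • b₁ j := by
          apply Finset.sum_congr rfl
          intro i _
          rw [map_smul, hPb i, Finset.smul_sum]
          apply Finset.sum_congr rfl
          intro j _
          rw [smul_smul]
      _ = ∑ j : Fin c, (∑ i : Fin c, (LinearMap.toMatrix b₀ b₁ P) j i * x i) • b₁ j := by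
          rw [Finset.sum_comm]
          apply Finset.sum_congr rfl
          intro j _
          rw [Finset.sum_smul]
          apply Finset.sum_congr rfl
          intro i _
          rw [mul_comm]
  refine ⟨w, ⟨(Finset.univ.sup fun i => (v i).natDegree) + 1, ?_⟩, ?_, ?_, ?_⟩
  · intro k hk
    rw [hw]
    apply Finset.sum_eq_zero
    intro i _
    rw [Polynomial.coeff_eq_zero_of_natDegree_lt, zero_smul]
    calc (v i).natDegree ≤ Finset.univ.sup fun i => (v i).natDegree :=
          Finset.le_sup (f := fun i => (v i).natDegree) (Finset.mem_univ i)
    _ < k := by omega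
  · rw [hw, happly A₁ fun i => (v i).coeff 0]
    apply Finset.sum_eq_zero
    intro j _
    rw [← hM₁, hrow0 j, zero_smul]
  · intro k
    rw [hw, happly A₁ fun i => (v i).coeff (k + 1), happly A₂ fun i => (v i).coeff k,
      ← Finset.sum_add_distrib]
    apply Finset.sum_eq_zero
    intro j _
    rw [← hM₁, ← hM₂, ← add_smul, ← Finset.sum_add_distrib, hrowS k j, zero_smul]
  · have hvi : ∃ i, v i ≠ 0 := by
      by_contra hno
      push_neg at hno
      exact hvne (funext hno)
    obtain ⟨i0, hi0⟩ := hvi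
    have hnall : ¬ ∀ m, (v i0).coeff m = 0 := fun hall =>
      hi0 (Polynomial.ext fun m => by rw [hall m, Polynomial.coeff_zero])
    push_neg at hnall
    obtain ⟨k, hk⟩ := hnall
    refine ⟨k, fun hcon => hk ?_⟩
    have hrepr : b₀.repr (w k) i0 = (v i0).coeff k := by
      rw [hw]
      simp only [map_sum, map_smul, Basis.repr_self]
      rw [Finsupp.finset_sum_apply]
      simp only [Finsupp.smul_apply, Finsupp.single_apply, smul_eq_mul]
      rw [Finset.sum_eq_single i0]
      · simp
      · intro b _ hb
        simp [hb]
      · intro h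
        exact absurd (Finset.mem_univ i0) h
    rw [hcon, map_zero] at hrepr
    exact hrepr.symm ▸ rfl

end Prop35

open Prop35 in
/-- (Proposition 3.5) For every θ_c-semistable (c,c)-dimensional framed representation
of Λ'_n, the matrix pencil A₁ + λA₂ is regular. -/
theorem stmt_1 (n c : ℕ) (hn : 2 ≤ n) (hc : 1 ≤ c)
    (V₀ V₁ W : Type) [AddCommGroup V₀] [Module ℂ V₀] [FiniteDimensional ℂ V₀]
    [AddCommGroup V₁] [Module ℂ V₁] [FiniteDimensional ℂ V₁]
    [AddCommGroup W] [Module ℂ W] [FiniteDimensional ℂ W]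
    (hV₀ : finrank ℂ V₀ = c) (hV₁ : finrank ℂ V₁ = c) (hW : finrank ℂ W = 1)
    (A₁ A₂ : V₀ →ₗ[ℂ] V₁)
    (B D : Fin (n - 1) → (V₁ →ₗ[ℂ] V₀))
    (e : V₀ →ₗ[ℂ] W) (f : Fin (n - 1) → (W →ₗ[ℂ] V₀))
    (hQ1'a : ∀ q, A₂ ∘ₗ D q = A₁ ∘ₗ B q)
    (hQ1'b : ∀ q, D q ∘ₗ A₂ = B q ∘ₗ A₁ + f q ∘ₗ e)
    -- θ_c-semistability
    (hss : ∀ (S₀ : Submodule ℂ V₀) (S₁ : Submodule ℂ V₁),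
      S₀.map A₁ ≤ S₁ → S₀.map A₂ ≤ S₁ →
      (∀ q, S₁.map (B q) ≤ S₀) → (∀ q, S₁.map (D q) ≤ S₀) →
      ((S₀ ≤ LinearMap.ker e →
          (2 * c : ℤ) * (finrank ℂ S₀ : ℤ) + (1 - 2 * c) * (finrank ℂ S₁ : ℤ) ≤ 0) ∧
       ((∀ q, LinearMap.range (f q) ≤ S₀) →
          (2 * c : ℤ) * (finrank ℂ S₀ : ℤ) + (1 - 2 * c) * (finrank ℂ S₁ : ℤ) ≤ c))) :
    ∃ ν₁ ν₂ : ℂ, Function.Bijective (ν₁ • A₁ + ν₂ • A₂) := by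
  classical
  by_contra hcon
  push_neg at hcon
  -- pointwise relations
  have ha : ∀ q y, A₂ (D q y) = A₁ (B q y) := fun q y => LinearMap.congr_fun (hQ1'a q) y
  have hb : ∀ q x, D q (A₂ x) = B q (A₁ x) + f q (e x) := by
    intro q x
    have h := LinearMap.congr_fun (hQ1'b q) x
    simp only [LinearMap.add_apply, LinearMap.coe_comp, Function.comp_apply] at h
    exact h
  -- pencil everywhere singular
  have hsing : ∀ τ : ℂ, ¬ Function.Bijective (A₁ + τ • A₂) := by
    intro τ hbij
    apply hcon 1 τ
    rwa [one_smul]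
  obtain ⟨w, ⟨N, hN⟩, hw0, hwc, k₀, hk₀⟩ := exists_chain c hV₀ hV₁ A₁ A₂ hsing
  -- case split
  by_cases hcase : ∀ w' : ℕ → V₀, (∃ N', ∀ i, N' ≤ i → w' i = 0) → A₁ (w' 0) = 0 →
      (∀ i, A₁ (w' (i + 1)) + A₂ (w' i) = 0) → ∀ i, e (w' i) = 0
  · -- CASE β : all finite solutions are killed by e
    set G : Set V₀ := {x | ∃ w' : ℕ → V₀, (∃ N', ∀ i, N' ≤ i → w' i = 0) ∧ A₁ (w' 0) = 0 ∧
      (∀ i, A₁ (w' (i + 1)) + A₂ (w' i) = 0) ∧ ∃ i, w' i = x} with hG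
    set U : Submodule ℂ V₀ := Submodule.span ℂ G with hU
    have hGmem : ∀ (w' : ℕ → V₀), (∃ N', ∀ i, N' ≤ i → w' i = 0) → A₁ (w' 0) = 0 →
        (∀ i, A₁ (w' (i + 1)) + A₂ (w' i) = 0) → ∀ i, w' i ∈ G :=
      fun w' h1 h2 h3 i => ⟨w', h1, h2, h3, i, rfl⟩
    -- A₁ U ⊆ A₂ U
    have hA1U : U.map A₁ ≤ U.map A₂ := by
      rw [hU, Submodule.map_span, Submodule.map_span]
      refine Submodule.span_le.2 ?_
      rintro _ ⟨x, ⟨w', h1, h2, h3, i, rfl⟩, rfl⟩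
      rcases i with _ | i'
      · rw [h2]; exact Submodule.zero_mem _
      · have h4 : A₁ (w' (i' + 1)) = -(A₂ (w' i')) := by
          rw [eq_neg_iff_add_eq_zero]; exact h3 i'
        rw [h4]
        exact Submodule.neg_mem _ (Submodule.subset_span ⟨w' i', hGmem w' h1 h2 h3 i', rfl⟩)
    -- B/D closure: images of solutions are solutions
    have hsol : ∀ q (w' : ℕ → V₀), (∃ N', ∀ i, N' ≤ i → w' i = 0) → A₁ (w' 0) = 0 →
        (∀ i, A₁ (w' (i + 1)) + A₂ (w' i) = 0) →
        ((∃ N', ∀ i, N' ≤ i → (B q) (A₂ (w' i)) = 0) ∧ A₁ ((B q) (A₂ (w' 0))) = 0 ∧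
          (∀ i, A₁ ((B q) (A₂ (w' (i + 1)))) + A₂ ((B q) (A₂ (w' i))) = 0)) := by
      intro q w' ⟨N', hN'⟩ h2 h3
      have he0 : ∀ i, e (w' i) = 0 := hcase w' ⟨N', hN'⟩ h2 h3
      refine ⟨⟨N', fun i hi => by rw [hN' i hi, map_zero, map_zero]⟩, ?_, ?_⟩
      · rw [← ha q (A₂ (w' 0)), hb q (w' 0), h2, he0 0]
        simp
      · intro i
        rw [← ha q (A₂ (w' (i + 1))), hb q (w' (i + 1)), he0 (i + 1), map_zero, add_zero,
          ← map_add, ← map_add, h3 i, map_zero, map_zero]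
    have hBU : ∀ q, (U.map A₂).map (B q) ≤ U := by
      intro q
      rw [hU, Submodule.map_span, Submodule.map_span]
      refine Submodule.span_le.2 ?_
      rintro _ ⟨_, ⟨x, ⟨w', h1, h2, h3, i, rfl⟩, rfl⟩, rfl⟩
      obtain ⟨hs1, hs2, hs3⟩ := hsol q w' h1 h2 h3
      exact Submodule.subset_span (hGmem (fun i => (B q) (A₂ (w' i))) hs1 hs2 hs3 i)
    have hDU : ∀ q, (U.map A₂).map (D q) ≤ U := by
      intro q
      rw [hU, Submodule.map_span, Submodule.map_span]
      refine Submodule.span_le.2 ?_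
      rintro _ ⟨_, ⟨x, ⟨w', h1, h2, h3, i, rfl⟩, rfl⟩, rfl⟩
      have he0 : ∀ i, e (w' i) = 0 := hcase w' h1 h2 h3
      rw [hb q (w' i), he0 i, map_zero, add_zero]
      rcases i with _ | i'
      · rw [h2, map_zero]; exact Submodule.zero_mem _
      · have : A₁ (w' (i' + 1)) = - A₂ (w' i') := by
          rw [eq_neg_iff_add_eq_zero]; exact h3 i'
        rw [this, map_neg]
        obtain ⟨hs1, hs2, hs3⟩ := hsol q w' h1 h2 h3
        exact Submodule.neg_mem _
          (Submodule.subset_span (hGmem (fun i => (B q) (A₂ (w' i))) hs1 hs2 hs3 i'))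
    have hkerU : U ≤ LinearMap.ker e := by
      rw [hU]
      refine Submodule.span_le.2 ?_
      rintro x ⟨w', h1, h2, h3, i, rfl⟩
      exact hcase w' h1 h2 h3 i
    have hineq := (hss U (U.map A₂) hA1U le_rfl hBU hDU).1 hkerU
    -- ranks
    have hwk : w k₀ ∈ U := Submodule.subset_span (hGmem w ⟨N, hN⟩ hw0 hwc k₀)
    have hU1 : 1 ≤ finrank ℂ U := by
      calc 1 = finrank ℂ (Submodule.span ℂ {w k₀}) := (finrank_span_singleton hk₀).symm
      _ ≤ finrank ℂ U := Submodule.finrank_mono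
          ((Submodule.span_singleton_le_iff_mem _ _).2 hwk)
    have hUm : finrank ℂ (U.map A₂) ≤ finrank ℂ U := Submodule.finrank_map_le A₂ U
    have hcz : (1 : ℤ) ≤ (c : ℤ) := by exact_mod_cast hc
    have ha' : (1 : ℤ) ≤ (finrank ℂ U : ℤ) := by exact_mod_cast hU1
    have hb' : (finrank ℂ (U.map A₂) : ℤ) ≤ (finrank ℂ U : ℤ) := by exact_mod_cast hUm
    nlinarith [hineq, mul_nonneg (by linarith : (0:ℤ) ≤ 2 * (c:ℤ) - 1)
      (by linarith : (0:ℤ) ≤ (finrank ℂ U : ℤ) - (finrank ℂ (U.map A₂) : ℤ))]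
  · -- CASE α
    push_neg at hcase
    obtain ⟨w', hsupp', h0', hch', i₀, hei₀⟩ := hcase
    obtain ⟨N', hN'⟩ := hsupp'
    classical
    set ω := e (w' i₀) with hω
    have hωne : ω ≠ 0 := hei₀
    have hWspan : (Submodule.span ℂ {ω} : Submodule ℂ W) = ⊤ :=
      Submodule.eq_top_of_finrank_eq (by rw [finrank_span_singleton hωne, hW])
    have hdec : ∀ x : W, ∃ k : ℂ, k • ω = x := fun x =>
      Submodule.mem_span_singleton.1 (hWspan ▸ Submodule.mem_top (x := x))
    choose γ hγ using fun i => hdec (e (w' i))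
    set M := N' + 1 with hM
    set P : Polynomial ℂ := ∑ i ∈ Finset.range M, Polynomial.C (γ i) * Polynomial.X ^ i with hP
    have hi₀M : i₀ < M := by
      by_contra hlt
      push_neg at hlt
      exact hei₀ (by rw [hω, hN' i₀ (by omega), map_zero])
    have hPcoeff : P.coeff i₀ = γ i₀ := by
      rw [hP, Polynomial.finset_sum_coeff]
      rw [Finset.sum_eq_single i₀]
      · simp
      · intro b _ hb
        rw [Polynomial.coeff_C_mul, Polynomial.coeff_X_pow]
        simp [Ne.symm hb]
      · intro h; exact absurd (Finset.mem_range.2 hi₀M) h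
    have hPne : P ≠ 0 := by
      intro h0
      have hγ0 : γ i₀ = 0 := by rw [← hPcoeff, h0, Polynomial.coeff_zero]
      apply hωne
      rw [hω, ← hγ i₀, hγ0, zero_smul]
    obtain ⟨τ, hτ⟩ : ∃ τ : ℂ, P.eval τ ≠ 0 := by
      by_contra hall; push_neg at hall
      exact hPne (Polynomial.funext fun τ => by rw [hall τ, Polynomial.eval_zero])
    have hA1w : ∀ i, A₁ (w' (i + 1)) = -(A₂ (w' i)) := by
      intro i; rw [eq_neg_iff_add_eq_zero]; exact hch' i
    set u : ℕ → V₀ := fun j => ∑ i ∈ Finset.range M,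
      ((((i + j).choose j : ℕ) : ℂ) * τ ^ i) • w' (i + j) with hudef
    have hu : ∀ j, u j = ∑ i ∈ Finset.range M,
        ((((i + j).choose j : ℕ) : ℂ) * τ ^ i) • w' (i + j) := fun j => rfl
    have hu0' : u 0 = ∑ i ∈ Finset.range M, τ ^ i • w' i := by
      rw [hu 0]
      apply Finset.sum_congr rfl
      intro i _
      norm_num
    -- (A₁ + τ A₂)(u 0) = 0
    have hbase : (A₁ + τ • A₂) (u 0) = 0 := by
      simp only [LinearMap.add_apply, LinearMap.smul_apply]
      set g' : ℕ → V₁ := fun i => τ ^ (i + 1) • A₂ (w' i) with hg'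
      have hA : A₁ (u 0) = - ∑ i ∈ Finset.range N', g' i := by
        rw [hu0', map_sum]
        simp only [map_smul]
        rw [hM, Finset.sum_range_succ' (fun i => τ ^ i • A₁ (w' i)) N']
        rw [h0', smul_zero, add_zero]
        rw [← Finset.sum_neg_distrib]
        apply Finset.sum_congr rfl
        intro i _
        rw [hA1w i, smul_neg, hg']
      have hB : τ • A₂ (u 0) = ∑ i ∈ Finset.range N', g' i := by
        rw [hu0', map_sum, Finset.smul_sum]
        simp only [map_smul]
        have hterm : ∀ i ∈ Finset.range M, τ • (τ ^ i • A₂ (w' i)) = g' i := by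
          intro i _
          rw [smul_smul, hg']
          congr 1
          ring
        rw [Finset.sum_congr rfl hterm, hM, Finset.sum_range_succ, hN' N' le_rfl]
        simp [g']
      rw [hA, hB, neg_add_cancel]
    -- e (u 0) ≠ 0
    have heu0 : e (u 0) = P.eval τ • ω := by
      rw [hu0', map_sum, hP, Polynomial.eval_finset_sum, Finset.sum_smul]
      apply Finset.sum_congr rfl
      intro i _
      rw [map_smul, ← hγ i, smul_smul, Polynomial.eval_mul, Polynomial.eval_pow,
        Polynomial.eval_C, Polynomial.eval_X, mul_comm]
    have heu0ne : e (u 0) ≠ 0 := by rw [heu0]; exact smul_ne_zero hτ hωne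
    -- the chain
    have hchainmain : ∀ j, A₁ (u (j + 1)) + τ • A₂ (u (j + 1)) + A₂ (u j) = 0 := by
      intro j
      have hS1 : A₁ (u (j + 1)) = ∑ i ∈ Finset.range M,
          (-(((i + j + 1).choose (j + 1) : ℕ) : ℂ) * τ ^ i) • A₂ (w' (i + j)) := by
        rw [hu (j + 1), map_sum]
        apply Finset.sum_congr rfl
        intro i _
        rw [map_smul]
        have hidx : i + (j + 1) = (i + j) + 1 := by omega
        rw [hidx, hA1w (i + j), smul_neg, ← neg_smul]
        congr 1
        ring
      have hS2 : τ • A₂ (u (j + 1)) = ∑ i ∈ Finset.range M,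
          ((((i + j).choose (j + 1) : ℕ) : ℂ) * τ ^ i) • A₂ (w' (i + j)) := by
        set g : ℕ → V₁ := fun m =>
          ((((m + j).choose (j + 1) : ℕ) : ℂ) * τ ^ m) • A₂ (w' (m + j)) with hg
        have e1 : τ • A₂ (u (j + 1)) = ∑ i ∈ Finset.range M, g (i + 1) := by
          rw [hu (j + 1), map_sum, Finset.smul_sum]
          apply Finset.sum_congr rfl
          intro i _
          rw [map_smul, smul_smul, hg]
          have hidx : i + (j + 1) = i + 1 + j := by omega
          rw [hidx]
          congr 1
          ring
        have e2 := Finset.sum_range_succ' g M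
        have e3 := Finset.sum_range_succ g M
        have hg0 : g 0 = 0 := by
          rw [hg]
          norm_num [Nat.choose_eq_zero_of_lt (Nat.lt_succ_self j)]
        have hgM : g M = 0 := by
          rw [hg]
          norm_num [hN' (M + j) (by omega)]
        rw [e1, ← add_zero (∑ i ∈ Finset.range M, g (i + 1)), ← hg0, ← e2, e3, hgM, add_zero]
      have hS3 : A₂ (u j) = ∑ i ∈ Finset.range M,
          ((((i + j).choose j : ℕ) : ℂ) * τ ^ i) • A₂ (w' (i + j)) := by
        rw [hu j, map_sum]
        apply Finset.sum_congr rfl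
        intro i _
        rw [map_smul]
      rw [hS1, hS2, hS3, ← Finset.sum_add_distrib, ← Finset.sum_add_distrib]
      apply Finset.sum_eq_zero
      intro i _
      rw [← add_smul, ← add_smul]
      have hz : (-(((i + j + 1).choose (j + 1) : ℕ) : ℂ) * τ ^ i)
          + ((((i + j).choose (j + 1) : ℕ) : ℂ) * τ ^ i)
          + ((((i + j).choose j : ℕ) : ℂ) * τ ^ i) = 0 := by
        push_cast [Nat.choose_succ_succ' (i + j) j]
        ring
      rw [hz, zero_smul]
    -- transformed data: A₁' = -A₂, A₂' = A₁ + τ•A₂, B' q = τ•B q + D q, D' q = -(B q)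
    have hr1 : ∀ (q : Fin (n - 1)) (y : V₁),
        (A₁ + τ • A₂) ((-(B q)) y) = (-A₂) ((τ • B q + D q) y) := by
      intro q y
      simp only [LinearMap.add_apply, LinearMap.smul_apply, LinearMap.neg_apply, map_neg,
        map_add, map_smul, smul_neg]
      rw [ha q y]
      abel
    have hr2 : ∀ (q : Fin (n - 1)) (x : V₀),
        (-(B q)) ((A₁ + τ • A₂) x) = (τ • B q + D q) ((-A₂) x) + f q (e x) := by
      intro q x
      simp only [LinearMap.add_apply, LinearMap.smul_apply, LinearMap.neg_apply, map_neg,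
        map_add, map_smul, smul_neg]
      rw [hb q x]
      abel
    have hstabmain : ∀ (S₀ : Submodule ℂ V₀) (S₁ : Submodule ℂ V₁),
        S₀.map (-A₂) ≤ S₁ → S₀.map (A₁ + τ • A₂) ≤ S₁ →
        (∀ q, S₁.map (τ • B q + D q) ≤ S₀) → (∀ q, S₁.map (-(B q)) ≤ S₀) →
        (∀ q, LinearMap.range (f q) ≤ S₀) →
        (2 * c : ℤ) * (finrank ℂ S₀ : ℤ) + (1 - 2 * c) * (finrank ℂ S₁ : ℤ) ≤ c := by
      intro S₀ S₁ h1 h2 hB' hD' hfr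
      refine (hss S₀ S₁ ?_ ?_ ?_ ?_).2 hfr
      · rintro _ ⟨x, hx, rfl⟩
        have m1 : (A₁ + τ • A₂) x ∈ S₁ := h2 ⟨x, hx, rfl⟩
        have m2 : (-A₂) x ∈ S₁ := h1 ⟨x, hx, rfl⟩
        have hxe : A₁ x = (A₁ + τ • A₂) x + τ • ((-A₂) x) := by
          simp only [LinearMap.add_apply, LinearMap.smul_apply, LinearMap.neg_apply, smul_neg]
          abel
        rw [hxe]
        exact Submodule.add_mem _ m1 (Submodule.smul_mem _ _ m2)
      · rintro _ ⟨x, hx, rfl⟩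
        have m2 : (-A₂) x ∈ S₁ := h1 ⟨x, hx, rfl⟩
        have hxe : A₂ x = (-1 : ℂ) • ((-A₂) x) := by
          simp
        rw [hxe]
        exact Submodule.smul_mem _ _ m2
      · intro q
        rintro _ ⟨y, hy, rfl⟩
        have m2 : (-(B q)) y ∈ S₀ := hD' q ⟨y, hy, rfl⟩
        have hxe : (B q) y = (-1 : ℂ) • ((-(B q)) y) := by
          simp
        rw [hxe]
        exact Submodule.smul_mem _ _ m2
      · intro q
        rintro _ ⟨y, hy, rfl⟩
        have m1 : (τ • B q + D q) y ∈ S₀ := hB' q ⟨y, hy, rfl⟩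
        have m2 : (-(B q)) y ∈ S₀ := hD' q ⟨y, hy, rfl⟩
        have hxe : (D q) y = (τ • B q + D q) y + τ • ((-(B q)) y) := by
          simp only [LinearMap.add_apply, LinearMap.smul_apply, LinearMap.neg_apply, smul_neg]
          abel
        rw [hxe]
        exact Submodule.add_mem _ m1 (Submodule.smul_mem _ _ m2)
    have hchainm : ∀ j, (-A₂) (u j) = (A₁ + τ • A₂) (u (j + 1)) := by
      intro j
      have h' : A₁ (u (j + 1)) + τ • A₂ (u (j + 1)) = -(A₂ (u j)) := by
        rw [eq_neg_iff_add_eq_zero]; exact hchainmain j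
      simp only [LinearMap.neg_apply, LinearMap.add_apply, LinearMap.smul_apply]
      exact h'.symm
    exact main5 c hc (-A₂) (A₁ + τ • A₂) (fun q => τ • B q + D q) (fun q => -(B q)) e f hW
      hr1 hr2 hstabmain u hbase heu0ne hchainm
end

section
/- (Content of Theorem 3.7, the main theorem) For every n ≥ 2 and c ≥ 1, every θ_c-semistable (c,c)-dimensional framed representation (A₁,A₂;C₁,…,C_n;e;f₁,…,f_{n−1}) of Λ_n has regular matrix pencil A₁ + λA₂, i.e., there exist ν₁, ν₂ ∈ ℂ such that ν₁A₁ + ν₂A₂ : V₀ → V₁ is bijective. (Since on the θ_c-semistable locus regularity of the pencil is equivalent to the equations f₁ = ⋯ = f_{n−1} = 0 cutting out the component H(n,c), this says that H(n,c) is the whole moduli space M(Λ_n, v_c, 1, θ_c).) -/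
open Module

section PencilChain

variable {M N : Type} [AddCommGroup M] [Module ℂ M] [AddCommGroup N] [Module ℂ N]

/-- A (finitely supported) polynomial kernel chain for the pencil `φ + λ • ψ`:
the coefficients of a polynomial vector `v(λ)` with `(φ + λψ) v(λ) = 0`. -/
def IsPencilChain (φ ψ : M →ₗ[ℂ] N) (v : ℕ → M) : Prop :=
  φ (v 0) = 0 ∧ (∀ i, φ (v (i + 1)) = -ψ (v i)) ∧ ∃ B, ∀ i, B ≤ i → v i = 0

/-- The top nonzero coefficient of a nonzero chain is killed by `ψ`. -/
lemma IsPencilChain.top {φ ψ : M →ₗ[ℂ] N} {v : ℕ → M} (h : IsPencilChain φ ψ v)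
    (hne : ∃ i, v i ≠ 0) : ∃ j, v j ≠ 0 ∧ ψ (v j) = 0 := by
  classical
  obtain ⟨B, hB⟩ := h.2.2
  obtain ⟨i₀, hi₀⟩ := hne
  have hi₀B : i₀ ≤ B := by
    by_contra hcon
    exact hi₀ (hB i₀ (by omega))
  refine ⟨Nat.findGreatest (fun i => v i ≠ 0) B,
    Nat.findGreatest_spec (P := fun i => v i ≠ 0) hi₀B hi₀, ?_⟩
  have hnext : v (Nat.findGreatest (fun i => v i ≠ 0) B + 1) = 0 := by
    by_cases hle : Nat.findGreatest (fun i => v i ≠ 0) B + 1 ≤ B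
    · exact not_not.mp
        (Nat.findGreatest_is_greatest (P := fun i => v i ≠ 0) (Nat.lt_succ_self _) hle)
    · exact hB _ (by omega)
  have h1 := h.2.1 (Nat.findGreatest (fun i => v i ≠ 0) B)
  rw [hnext, map_zero] at h1
  exact neg_eq_zero.mp h1.symm

open Matrix Polynomial in
/-- If no member of the pencil `a • φ + b • ψ` between spaces of the same finite dimension
is bijective, then there is a nonzero polynomial kernel chain. -/
lemma exists_pencil_chain [FiniteDimensional ℂ M] [FiniteDimensional ℂ N] {c : ℕ}
    (hM : finrank ℂ M = c) (hN : finrank ℂ N = c) {φ ψ : M →ₗ[ℂ] N}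
    (hsing : ∀ a b : ℂ, ¬Function.Bijective (a • φ + b • ψ)) :
    ∃ v : ℕ → M, IsPencilChain φ ψ v ∧ ∃ i, v i ≠ 0 := by
  classical
  let b₀ : Basis (Fin c) ℂ M := (Module.finBasis ℂ M).reindex (finCongr hM)
  let b₁ : Basis (Fin c) ℂ N := (Module.finBasis ℂ N).reindex (finCongr hN)
  set F : Matrix (Fin c) (Fin c) ℂ := LinearMap.toMatrix b₀ b₁ φ with hF
  set G : Matrix (Fin c) (Fin c) ℂ := LinearMap.toMatrix b₀ b₁ ψ with hG
  have hdet : ∀ lam : ℂ, (F + lam • G).det = 0 := by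
    intro lam
    by_contra hd
    apply hsing 1 lam
    have hmat : LinearMap.toMatrix b₀ b₁ ((1 : ℂ) • φ + lam • ψ) = F + lam • G := by
      rw [map_add, _root_.map_smul, _root_.map_smul, one_smul, ← hF, ← hG]
    have hinj : Function.Injective ((1 : ℂ) • φ + lam • ψ) := by
      rw [← LinearMap.ker_eq_bot, Submodule.eq_bot_iff]
      intro x hx
      have hx0 : ((1 : ℂ) • φ + lam • ψ) x = 0 := hx
      have hmv := LinearMap.toMatrix_mulVec_repr b₀ b₁ ((1 : ℂ) • φ + lam • ψ) x
      rw [hmat, hx0, map_zero] at hmv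
      have hrz : (F + lam • G) *ᵥ (b₀.repr x : Fin c → ℂ) = 0 := by
        rw [hmv]; simp
      have h0 : (b₀.repr x : Fin c → ℂ) = 0 := Matrix.eq_zero_of_mulVec_eq_zero hd hrz
      have hr0 : b₀.repr x = 0 := by
        ext k
        have := congrFun h0 k
        simpa using this
      exact (LinearEquiv.map_eq_zero_iff b₀.repr).mp hr0
    have hsurj := (LinearMap.injective_iff_surjective_of_finrank_eq_finrank
      (by rw [hM, hN])).mp hinj
    exact ⟨hinj, hsurj⟩
  set Fp : Matrix (Fin c) (Fin c) ℂ[X] :=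
    F.map Polynomial.C + (X : ℂ[X]) • G.map Polynomial.C with hFp
  have hdetp : Fp.det = 0 := by
    apply Polynomial.zero_of_eval_zero
    intro lam
    have hmap : (Polynomial.evalRingHom lam).mapMatrix Fp = F + lam • G := by
      ext i j
      simp [hFp, Matrix.map_apply, Matrix.add_apply, Matrix.smul_apply, smul_eq_mul,
        RingHom.mapMatrix_apply]
      ring
    have h1 := RingHom.map_det (Polynomial.evalRingHom lam) Fp
    rw [hmap, hdet lam] at h1
    simpa using h1
  obtain ⟨w, hw0, hww⟩ := Matrix.exists_mulVec_eq_zero_iff.mpr hdetp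
  set cf : ℕ → Fin c → ℂ := fun i r => (w r).coeff i with hcf
  set v : ℕ → M := fun i => b₀.equivFun.symm (cf i) with hv
  have hcoeffM : ∀ (H : Matrix (Fin c) (Fin c) ℂ) (i : ℕ) (k : Fin c),
      ((H.map Polynomial.C *ᵥ w) k).coeff i = (H *ᵥ cf i) k := by
    intro H i k
    simp [Matrix.mulVec, dotProduct, Polynomial.finset_sum_coeff, Matrix.map_apply,
      Polynomial.coeff_C_mul, hcf]
  have hsplit : ∀ k, (F.map Polynomial.C *ᵥ w) k + X * ((G.map Polynomial.C *ᵥ w) k) = 0 := by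
    intro k
    rw [hFp, Matrix.add_mulVec, Matrix.smul_mulVec] at hww
    have := congrFun hww k
    simpa [smul_eq_mul] using this
  have hchain0 : ∀ k, (F *ᵥ cf 0) k = 0 := by
    intro k
    have h := congrArg (fun p => Polynomial.coeff p 0) (hsplit k)
    simp only [Polynomial.coeff_add, Polynomial.mul_coeff_zero, Polynomial.coeff_X_zero,
      zero_mul, add_zero, Polynomial.coeff_zero] at h
    rw [hcoeffM F 0 k] at h
    exact h
  have hchainS : ∀ i k, (F *ᵥ cf (i + 1)) k = -((G *ᵥ cf i) k) := by
    intro i k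
    have h := congrArg (fun p => Polynomial.coeff p (i + 1)) (hsplit k)
    simp only [Polynomial.coeff_add, Polynomial.coeff_X_mul, Polynomial.coeff_zero] at h
    rw [hcoeffM F (i + 1) k, hcoeffM G i k] at h
    linear_combination h
  have hreprv : ∀ i, (b₀.repr (v i) : Fin c → ℂ) = cf i := by
    intro i
    rw [hv]
    show (b₀.repr (b₀.equivFun.symm (cf i)) : Fin c → ℂ) = cf i
    have := b₀.equivFun.apply_symm_apply (cf i)
    rwa [Basis.equivFun_apply] at this
  have hφ0 : φ (v 0) = 0 := by
    have h1 := LinearMap.toMatrix_mulVec_repr b₀ b₁ φ (v 0)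
    rw [← hF, hreprv 0] at h1
    apply b₁.repr.injective
    ext k
    have ek := congrFun h1 k
    rw [map_zero, Finsupp.zero_apply, ← ek]
    exact hchain0 k
  have hφS : ∀ i, φ (v (i + 1)) = -ψ (v i) := by
    intro i
    have h1 := LinearMap.toMatrix_mulVec_repr b₀ b₁ φ (v (i + 1))
    rw [← hF, hreprv (i + 1)] at h1
    have h2 := LinearMap.toMatrix_mulVec_repr b₀ b₁ ψ (v i)
    rw [← hG, hreprv i] at h2
    apply b₁.repr.injective
    ext k
    have e1 := congrFun h1 k
    have e2 := congrFun h2 k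
    rw [map_neg, Finsupp.neg_apply, ← e1, ← e2]
    exact hchainS i k
  refine ⟨v, ⟨hφ0, hφS, ?_⟩, ?_⟩
  · refine ⟨(Finset.univ.sup fun r => (w r).natDegree) + 1, fun i hi => ?_⟩
    have hcf0 : cf i = 0 := by
      funext r
      show (w r).coeff i = 0
      apply Polynomial.coeff_eq_zero_of_natDegree_lt
      have hle : (w r).natDegree ≤ Finset.univ.sup fun r => (w r).natDegree :=
        Finset.le_sup (f := fun r => (w r).natDegree) (Finset.mem_univ r)
      omega
    rw [hv]
    simp only [hcf0, map_zero]
  · have hr : ∃ r, w r ≠ 0 := by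
      by_contra hall
      push_neg at hall
      exact hw0 (funext hall)
    obtain ⟨r, hr⟩ := hr
    have hi : ∃ i, (w r).coeff i ≠ 0 := by
      by_contra hall
      push_neg at hall
      exact hr (Polynomial.ext hall)
    obtain ⟨i, hi⟩ := hi
    refine ⟨i, fun h0 => hi ?_⟩
    have hcfi : cf i = 0 := by
      rw [hv] at h0
      exact (LinearEquiv.map_eq_zero_iff b₀.equivFun.symm).mp h0
    exact congrFun hcfi r

end PencilChain

/-- Arithmetic helper: the convolution identity produced by evaluating left chains
against a right chain. -/
lemma chain_convolution (t : ℕ → ℕ → ℂ) (d cc : ℕ → ℂ)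
    (hd00 : d 0 * cc 0 = 0)
    (hT0 : ∀ j, t j 0 = -(d 0 * cc (j + 1)))
    (hT0' : ∀ i, t 0 i = d (i + 1) * cc 0)
    (hR : ∀ j i, t j (i + 1) = t (j + 1) i - d (i + 1) * cc (j + 1)) :
    ∀ k, ∑ s ∈ Finset.range (k + 1), d s * cc (k - s) = 0 := by
  have hTform : ∀ i j, t j i = -∑ s ∈ Finset.range (i + 1), d s * cc (j + 1 + i - s) := by
    intro i
    induction i with
    | zero =>
      intro j
      rw [Finset.sum_range_one]
      simpa using hT0 j
    | succ i ih =>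
      intro j
      have h1 : ∑ s ∈ Finset.range (i + 1), d s * cc (j + 1 + (i + 1) - s)
          = ∑ s ∈ Finset.range (i + 1), d s * cc (j + 1 + 1 + i - s) :=
        Finset.sum_congr rfl (fun s _ => by
          have hidx : j + 1 + (i + 1) - s = j + 1 + 1 + i - s := by omega
          rw [hidx])
      have h2 : j + 1 + (i + 1) - (i + 1) = j + 1 := by omega
      rw [Finset.sum_range_succ, hR j i, ih (j + 1), h1, h2]
      ring
  intro k
  cases k with
  | zero => simpa using hd00
  | succ k =>
    have h1 := hT0' k
    have h2 := hTform k 0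
    rw [Finset.sum_range_succ]
    have h3 : ∑ s ∈ Finset.range (k + 1), d s * cc (k + 1 - s)
        = ∑ s ∈ Finset.range (k + 1), d s * cc (0 + 1 + k - s) :=
      Finset.sum_congr rfl (fun s hs => by
        have hsk : s < k + 1 := Finset.mem_range.mp hs
        have hidx : k + 1 - s = 0 + 1 + k - s := by omega
        rw [hidx])
    have h4 : k + 1 - (k + 1) = 0 := by omega
    rw [h3, h4]
    linear_combination h2 - h1

/-- Coefficient extraction for explicitly truncated polynomials. -/
lemma coeff_sum_C_mul_X_pow (g : ℕ → ℂ) (B : ℕ) (hg : ∀ i, B ≤ i → g i = 0) (j : ℕ) :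
    (∑ i ∈ Finset.range B, Polynomial.C (g i) * Polynomial.X ^ i).coeff j = g j := by
  rw [Polynomial.finset_sum_coeff]
  simp_rw [Polynomial.coeff_C_mul, Polynomial.coeff_X_pow]
  by_cases hj : j < B
  · rw [Finset.sum_eq_single j]
    · simp
    · intro b _ hbj
      simp [Ne.symm hbj]
    · intro hjn
      exact absurd (Finset.mem_range.mpr hj) hjn
  · rw [hg j (by omega)]
    apply Finset.sum_eq_zero
    intro b hb
    have hbj : ¬(j = b) := by
      simp only [Finset.mem_range] at hb
      omega
    simp [hbj]

/-- If the convolution of two finitely supported sequences vanishes and one of them is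
nonzero, the other vanishes identically. -/
lemma conv_eliminate (cc d : ℕ → ℂ) (Bz Bu i₀ : ℕ)
    (hcB : ∀ j, Bz ≤ j → cc j = 0) (hdB : ∀ i, Bu ≤ i → d i = 0) (hdi₀ : d i₀ ≠ 0)
    (hconv : ∀ k, ∑ s ∈ Finset.range (k + 1), d s * cc (k - s) = 0) :
    ∀ j, cc j = 0 := by
  classical
  set Pc : Polynomial ℂ := ∑ j ∈ Finset.range Bz, Polynomial.C (cc j) * Polynomial.X ^ j
    with hPc
  set Qd : Polynomial ℂ := ∑ i ∈ Finset.range Bu, Polynomial.C (d i) * Polynomial.X ^ i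
    with hQd
  have hPcoeff : ∀ j, Pc.coeff j = cc j := by
    intro j
    rw [hPc]
    exact coeff_sum_C_mul_X_pow cc Bz hcB j
  have hQcoeff : ∀ i, Qd.coeff i = d i := by
    intro i
    rw [hQd]
    exact coeff_sum_C_mul_X_pow d Bu hdB i
  have hPQ : Pc * Qd = 0 := by
    apply Polynomial.ext
    intro k
    rw [Polynomial.coeff_mul, Polynomial.coeff_zero,
      Finset.Nat.sum_antidiagonal_eq_sum_range_succ_mk]
    simp_rw [hPcoeff, hQcoeff]
    rw [← Finset.sum_range_reflect]
    have hcongr : ∀ s ∈ Finset.range (k + 1),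
        cc (k + 1 - 1 - s) * d (k - (k + 1 - 1 - s)) = d s * cc (k - s) := by
      intro s hs
      simp only [Finset.mem_range] at hs
      have h1 : k + 1 - 1 - s = k - s := by omega
      have h2 : k - (k - s) = s := by omega
      rw [h1, h2, mul_comm]
    rw [Finset.sum_congr rfl hcongr]
    exact hconv k
  have hQne : Qd ≠ 0 := by
    intro h0
    apply hdi₀
    rw [← hQcoeff i₀, h0, Polynomial.coeff_zero]
  have hPzero : Pc = 0 := by
    rcases mul_eq_zero.mp hPQ with h | h
    · exact h
    · exact absurd h hQne
  intro j
  rw [← hPcoeff j, hPzero, Polynomial.coeff_zero]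

set_option maxHeartbeats 1600000 in
/-- (Theorem 3.7, main theorem) For every n ≥ 2 and c ≥ 1, every θ_c-semistable
(c,c)-dimensional framed representation of Λ_n has regular matrix pencil A₁ + λA₂. -/
theorem stmt_3 (n c : ℕ) (hn : 2 ≤ n) (hc : 1 ≤ c)
    (V₀ V₁ W : Type) [AddCommGroup V₀] [Module ℂ V₀] [FiniteDimensional ℂ V₀]
    [AddCommGroup V₁] [Module ℂ V₁] [FiniteDimensional ℂ V₁]
    [AddCommGroup W] [Module ℂ W] [FiniteDimensional ℂ W]
    (hV₀ : finrank ℂ V₀ = c) (hV₁ : finrank ℂ V₁ = c) (hW : finrank ℂ W = 1)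
    (A₁ A₂ : V₀ →ₗ[ℂ] V₁)
    (C : Fin n → (V₁ →ₗ[ℂ] V₀))
    (e : V₀ →ₗ[ℂ] W) (f : Fin (n - 1) → (W →ₗ[ℂ] V₀))
    -- the relations (Q1)
    (hQ1a : ∀ q : Fin (n - 1),
      A₂ ∘ₗ C ⟨q.1 + 1, by have := q.2; omega⟩ = A₁ ∘ₗ C ⟨q.1, by have := q.2; omega⟩)
    (hQ1b : ∀ q : Fin (n - 1),
      C ⟨q.1 + 1, by have := q.2; omega⟩ ∘ₗ A₂ =
        C ⟨q.1, by have := q.2; omega⟩ ∘ₗ A₁ + f q ∘ₗ e)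
    -- θ_c-semistability
    (hss : ∀ (S₀ : Submodule ℂ V₀) (S₁ : Submodule ℂ V₁),
      S₀.map A₁ ≤ S₁ → S₀.map A₂ ≤ S₁ →
      (∀ q : Fin n, S₁.map (C q) ≤ S₀) →
      ((S₀ ≤ LinearMap.ker e →
          (2 * c : ℤ) * (finrank ℂ S₀ : ℤ) + (1 - 2 * c) * (finrank ℂ S₁ : ℤ) ≤ 0) ∧
       ((∀ q, LinearMap.range (f q) ≤ S₀) →
          (2 * c : ℤ) * (finrank ℂ S₀ : ℤ) + (1 - 2 * c) * (finrank ℂ S₁ : ℤ) ≤ c))) :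
    ∃ ν₁ ν₂ : ℂ, Function.Bijective (ν₁ • A₁ + ν₂ • A₂) := by
  classical
  by_contra hcon
  push_neg at hcon
  have hn0 : 0 < n := by omega
  have hq0lt : (0 : ℕ) < n - 1 := by omega
  -- pointwise forms of the relations
  have hq0n : ∀ q : Fin (n - 1), q.1 < n := fun q => by have := q.2; omega
  have hq1n : ∀ q : Fin (n - 1), q.1 + 1 < n := fun q => by have := q.2; omega
  have hrel1 : ∀ (q : Fin (n - 1)) (y : V₁),
      A₂ (C ⟨q.1 + 1, hq1n q⟩ y) = A₁ (C ⟨q.1, hq0n q⟩ y) := by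
    intro q y
    have := congrArg (fun (T : V₁ →ₗ[ℂ] V₁) => T y) (hQ1a q)
    simpa using this
  have hrel2 : ∀ (q : Fin (n - 1)) (x : V₀),
      C ⟨q.1 + 1, hq1n q⟩ (A₂ x) = C ⟨q.1, hq0n q⟩ (A₁ x) + f q (e x) := by
    intro q x
    have := congrArg (fun (T : V₀ →ₗ[ℂ] V₀) => T x) (hQ1b q)
    simpa using this
  -- a nonzero right chain always exists
  obtain ⟨v, hv, hvne⟩ := exists_pencil_chain hV₀ hV₁ hcon
  by_cases hE : ∀ u, IsPencilChain A₁ A₂ u → ∀ i, e (u i) = 0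
  · -- Case 1 : e vanishes on all right chains
    set Gen : Set V₀ := {x | ∃ u, IsPencilChain A₁ A₂ u ∧ ∃ i, x = u i} with hGen
    set S₀ : Submodule ℂ V₀ := Submodule.span ℂ Gen with hS₀
    set S₁ : Submodule ℂ V₁ := S₀.map A₂ with hS₁
    have hgen_mem : ∀ u, IsPencilChain A₁ A₂ u → ∀ i, u i ∈ S₀ := fun u hu i =>
      Submodule.subset_span ⟨u, hu, i, rfl⟩
    have hshift : ∀ u, IsPencilChain A₁ A₂ u →
        IsPencilChain A₁ A₂ (fun i => C ⟨0, hn0⟩ (A₂ (u i))) := by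
      intro u hu
      refine ⟨?_, ?_, ?_⟩
      · show A₁ (C ⟨0, hn0⟩ (A₂ (u 0))) = 0
        rw [← hrel1 ⟨0, hq0lt⟩ (A₂ (u 0)), hrel2 ⟨0, hq0lt⟩ (u 0), hu.1, hE u hu 0]
        simp
      · intro i
        show A₁ (C ⟨0, hn0⟩ (A₂ (u (i + 1)))) = -A₂ (C ⟨0, hn0⟩ (A₂ (u i)))
        rw [← hrel1 ⟨0, hq0lt⟩ (A₂ (u (i + 1))), hrel2 ⟨0, hq0lt⟩ (u (i + 1)), hu.2.1 i,
          hE u hu (i + 1)]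
        simp
      · obtain ⟨B, hB⟩ := hu.2.2
        refine ⟨B, fun i hi => ?_⟩
        show C ⟨0, hn0⟩ (A₂ (u i)) = 0
        rw [hB i hi]
        simp
    have hclos : ∀ (k : ℕ) (hk : k < n), ∀ u, IsPencilChain A₁ A₂ u → ∀ i,
        C ⟨k, hk⟩ (A₂ (u i)) ∈ S₀ := by
      intro k
      induction k with
      | zero =>
        intro hk u hu i
        exact Submodule.subset_span ⟨_, hshift u hu, i, rfl⟩
      | succ k ih =>
        intro hk u hu i
        have hkn : k < n - 1 := by omega
        rw [hrel2 ⟨k, hkn⟩ (u i), hE u hu i, map_zero, add_zero]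
        cases i with
        | zero =>
          rw [hu.1, map_zero]
          exact Submodule.zero_mem _
        | succ j =>
          rw [hu.2.1 j, map_neg]
          exact Submodule.neg_mem _ (ih (by omega) u hu j)
    have hA1le : S₀.map A₁ ≤ S₁ := by
      rw [hS₀, Submodule.map_span_le]
      rintro x ⟨u, hu, i, rfl⟩
      cases i with
      | zero =>
        rw [hu.1]
        exact Submodule.zero_mem _
      | succ j =>
        rw [hu.2.1 j, ← map_neg]
        exact Submodule.mem_map_of_mem (Submodule.neg_mem _ (hgen_mem u hu j))
    have hA2le : S₀.map A₂ ≤ S₁ := le_of_eq hS₁.symm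
    have hCle : ∀ q : Fin n, S₁.map (C q) ≤ S₀ := by
      intro q
      rw [hS₁, hS₀, Submodule.map_span, Submodule.map_span_le]
      rintro y ⟨x, ⟨u, hu, i, rfl⟩, rfl⟩
      exact hclos q.1 q.2 u hu i
    have hkere : S₀ ≤ LinearMap.ker e := by
      rw [hS₀, Submodule.span_le]
      rintro x ⟨u, hu, i, rfl⟩
      exact LinearMap.mem_ker.mpr (hE u hu i)
    obtain ⟨j, hvj, hAvj⟩ := hv.top hvne
    have hvjS : v j ∈ S₀ := hgen_mem v hv j
    have hS₀pos : 0 < finrank ℂ S₀ := by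
      have : Nontrivial S₀ :=
        ⟨⟨v j, hvjS⟩, 0, fun h => hvj (congrArg Subtype.val h)⟩
      exact Module.finrank_pos
    set Φ : S₀ →ₗ[ℂ] V₁ := A₂ ∘ₗ S₀.subtype with hΦ
    have hrange : LinearMap.range Φ = S₁ := by
      rw [hΦ, LinearMap.range_comp, Submodule.range_subtype, hS₁]
    have hkerx : (⟨v j, hvjS⟩ : S₀) ∈ LinearMap.ker Φ := by
      rw [LinearMap.mem_ker, hΦ]
      simpa using hAvj
    have hkerpos : 0 < finrank ℂ (LinearMap.ker Φ) := by
      have : Nontrivial (LinearMap.ker Φ) := by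
        refine ⟨⟨⟨v j, hvjS⟩, hkerx⟩, 0, fun h => hvj ?_⟩
        have h1 : (⟨v j, hvjS⟩ : S₀) = 0 := congrArg Subtype.val h
        exact congrArg Subtype.val h1
      exact Module.finrank_pos
    have hrk := LinearMap.finrank_range_add_finrank_ker Φ
    rw [hrange] at hrk
    have hlt : finrank ℂ S₁ < finrank ℂ S₀ := by omega
    have hineq := (hss S₀ S₁ hA1le hA2le hCle).1 hkere
    have h1 : (finrank ℂ S₁ : ℤ) + 1 ≤ (finrank ℂ S₀ : ℤ) := by exact_mod_cast hlt
    have h2 : (1 : ℤ) ≤ (finrank ℂ S₀ : ℤ) := by exact_mod_cast hS₀pos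
    have h3 : (1 : ℤ) ≤ (c : ℤ) := by exact_mod_cast hc
    have h4 : (0 : ℤ) ≤ (finrank ℂ S₁ : ℤ) := Int.ofNat_nonneg _
    nlinarith [mul_le_mul_of_nonneg_left h1 (by linarith : (0 : ℤ) ≤ 2 * (c : ℤ))]
  · -- Case 2 : some right chain has a coefficient not killed by e
    push_neg at hE
    obtain ⟨u, hu, i₀, hei₀⟩ := hE
    set w₀ : W := e (u i₀) with hw₀def
    have hw₀ : w₀ ≠ 0 := hei₀
    have hspanW : ∀ w : W, ∃ a : ℂ, w = a • w₀ := by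
      intro w
      have h1 : finrank ℂ (Submodule.span ℂ {w₀}) = 1 := finrank_span_singleton hw₀
      have h2 : Submodule.span ℂ {w₀} = ⊤ := Submodule.eq_top_of_finrank_eq (by rw [h1, hW])
      have hmem : w ∈ Submodule.span ℂ ({w₀} : Set W) := h2 ▸ Submodule.mem_top
      obtain ⟨a, ha⟩ := Submodule.mem_span_singleton.mp hmem
      exact ⟨a, ha.symm⟩
    choose d hd using fun i => hspanW (e (u i))
    have hdi₀ : d i₀ ≠ 0 := by
      intro h0
      apply hw₀
      have hh := hd i₀
      rw [h0, zero_smul] at hh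
      exact hh
    have hd0 : ∀ i, u i = 0 → d i = 0 := by
      intro i h0
      have h1 := hd i
      rw [h0, map_zero] at h1
      rcases smul_eq_zero.mp h1.symm with h | h
      · exact h
      · exact absurd h hw₀
    -- left chains
    have hdualV₁ : finrank ℂ (Module.Dual ℂ V₁) = c := by
      rw [Subspace.dual_finrank_eq, hV₁]
    have hdualV₀ : finrank ℂ (Module.Dual ℂ V₀) = c := by
      rw [Subspace.dual_finrank_eq, hV₀]
    have hLsing : ∀ a b : ℂ, ¬Function.Bijective (a • A₁.dualMap + b • A₂.dualMap) := by
      intro a b hbij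
      apply hcon a b
      rw [← LinearMap.dualMap_bijective_iff]
      have hdm : (a • A₁ + b • A₂).dualMap = a • A₁.dualMap + b • A₂.dualMap := by
        ext ξ x
        simp [LinearMap.dualMap_apply, LinearMap.add_apply, LinearMap.smul_apply,
          map_add, map_smul]
      rw [hdm]
      exact hbij
    obtain ⟨ζx, hζx, hζxne⟩ := exists_pencil_chain hdualV₁ hdualV₀ hLsing
    -- key identities ("diamond" relations)
    have hdia0 : ∀ (ζ : ℕ → Module.Dual ℂ V₁), IsPencilChain A₁.dualMap A₂.dualMap ζ →
        ∀ (q : Fin (n - 1)) (x : V₀),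
        ζ 0 (A₂ (C ⟨q.1, hq0n q⟩ (A₁ x))) = -(ζ 0 (A₂ (f q (e x)))) := by
      intro ζ hζ q x
      have h1 : C ⟨q.1, hq0n q⟩ (A₁ x) = C ⟨q.1 + 1, hq1n q⟩ (A₂ x) - f q (e x) :=
        eq_sub_of_add_eq (hrel2 q x).symm
      rw [h1, map_sub, map_sub, hrel1 q (A₂ x)]
      have h2 : ζ 0 (A₁ (C ⟨q.1, hq0n q⟩ (A₂ x))) = 0 := by
        have := congrArg (fun (T : Module.Dual ℂ V₀) => T (C ⟨q.1, hq0n q⟩ (A₂ x))) hζ.1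
        simpa [LinearMap.dualMap_apply] using this
      rw [h2, zero_sub]
    have hdiaS : ∀ (ζ : ℕ → Module.Dual ℂ V₁), IsPencilChain A₁.dualMap A₂.dualMap ζ →
        ∀ (q : Fin (n - 1)) (j : ℕ) (x : V₀),
        ζ (j + 1) (A₂ (C ⟨q.1, hq0n q⟩ (A₁ x))) =
          -(ζ j (A₂ (C ⟨q.1, hq0n q⟩ (A₂ x)))) - ζ (j + 1) (A₂ (f q (e x))) := by
      intro ζ hζ q j x
      have h1 : C ⟨q.1, hq0n q⟩ (A₁ x) = C ⟨q.1 + 1, hq1n q⟩ (A₂ x) - f q (e x) :=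
        eq_sub_of_add_eq (hrel2 q x).symm
      rw [h1, map_sub, map_sub, hrel1 q (A₂ x)]
      have h2 : ζ (j + 1) (A₁ (C ⟨q.1, hq0n q⟩ (A₂ x))) =
          -(ζ j (A₂ (C ⟨q.1, hq0n q⟩ (A₂ x)))) := by
        have := congrArg (fun (T : Module.Dual ℂ V₀) =>
          T (C ⟨q.1, hq0n q⟩ (A₂ x))) (hζ.2.1 j)
        simpa [LinearMap.dualMap_apply] using this
      rw [h2]
    -- every left chain kills A₂ ∘ f q
    have hM1 : ∀ (ζ : ℕ → Module.Dual ℂ V₁), IsPencilChain A₁.dualMap A₂.dualMap ζ →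
        ∀ (q : Fin (n - 1)) (j : ℕ) (w : W), ζ j (A₂ (f q w)) = 0 := by
      intro ζ hζ q
      obtain ⟨Bz, hBz⟩ := hζ.2.2
      obtain ⟨Bu, hBu⟩ := hu.2.2
      have hcB : ∀ j, Bz ≤ j → ζ j (A₂ (f q w₀)) = 0 := by
        intro j hj
        rw [hBz j hj]
        simp
      have hdB : ∀ i, Bu ≤ i → d i = 0 := fun i hi => hd0 i (hBu i hi)
      have hd00 : d 0 * ζ 0 (A₂ (f q w₀)) = 0 := by
        have h := hdia0 ζ hζ q (u 0)
        rw [hu.1, map_zero, map_zero, map_zero, hd 0, map_smul, map_smul, map_smul,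
          smul_eq_mul] at h
        linear_combination h
      have hT0 : ∀ j, ζ j (A₂ (C ⟨q.1, hq0n q⟩ (A₂ (u 0)))) =
          -(d 0 * ζ (j + 1) (A₂ (f q w₀))) := by
        intro j
        have h := hdiaS ζ hζ q j (u 0)
        rw [hu.1, map_zero, map_zero, map_zero, hd 0, map_smul, map_smul, map_smul,
          smul_eq_mul] at h
        linear_combination h
      have hT0' : ∀ i, ζ 0 (A₂ (C ⟨q.1, hq0n q⟩ (A₂ (u i)))) =
          d (i + 1) * ζ 0 (A₂ (f q w₀)) := by
        intro i
        have h := hdia0 ζ hζ q (u (i + 1))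
        rw [hu.2.1 i, map_neg, map_neg, map_neg, hd (i + 1), map_smul, map_smul, map_smul,
          smul_eq_mul] at h
        linear_combination -h
      have hR : ∀ j i, ζ j (A₂ (C ⟨q.1, hq0n q⟩ (A₂ (u (i + 1))))) =
          ζ (j + 1) (A₂ (C ⟨q.1, hq0n q⟩ (A₂ (u i)))) -
            d (i + 1) * ζ (j + 1) (A₂ (f q w₀)) := by
        intro j i
        have h := hdiaS ζ hζ q j (u (i + 1))
        rw [hu.2.1 i, map_neg, map_neg, map_neg, hd (i + 1), map_smul, map_smul, map_smul,
          smul_eq_mul] at h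
        linear_combination h
      have hconv := chain_convolution
        (fun j i => ζ j (A₂ (C ⟨q.1, hq0n q⟩ (A₂ (u i))))) d
        (fun j => ζ j (A₂ (f q w₀))) hd00 hT0 hT0' hR
      have hcall := conv_eliminate (fun j => ζ j (A₂ (f q w₀))) d Bz Bu i₀ hcB hdB hdi₀ hconv
      intro j w
      obtain ⟨a, rfl⟩ := hspanW w
      have hcj : ζ j (A₂ (f q w₀)) = 0 := hcall j
      rw [map_smul, map_smul, map_smul, smul_eq_mul, hcj, mul_zero]
    -- shifted left chains
    have hM2 : ∀ (ζ : ℕ → Module.Dual ℂ V₁), IsPencilChain A₁.dualMap A₂.dualMap ζ →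
        ∀ q : Fin (n - 1), IsPencilChain A₁.dualMap A₂.dualMap
          (fun j => ζ j ∘ₗ A₂ ∘ₗ C ⟨q.1, hq0n q⟩) := by
      intro ζ hζ q
      refine ⟨?_, ?_, ?_⟩
      · apply LinearMap.ext
        intro y
        simp only [LinearMap.dualMap_apply, LinearMap.comp_apply, LinearMap.zero_apply]
        rw [hdia0 ζ hζ q y, hM1 ζ hζ q 0 (e y), neg_zero]
      · intro j
        apply LinearMap.ext
        intro y
        simp only [LinearMap.dualMap_apply, LinearMap.comp_apply, LinearMap.neg_apply]
        rw [hdiaS ζ hζ q j y, hM1 ζ hζ q (j + 1) (e y), sub_zero]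
      · obtain ⟨B, hB⟩ := hζ.2.2
        refine ⟨B, fun i hi => ?_⟩
        show ζ i ∘ₗ A₂ ∘ₗ C ⟨q.1, hq0n q⟩ = 0
        rw [hB i hi]
        apply LinearMap.ext
        intro y
        simp
    -- the destabilizing subrepresentation
    set GenP : Set (Module.Dual ℂ V₁) :=
      {ξ | ∃ ζ, IsPencilChain A₁.dualMap A₂.dualMap ζ ∧ ∃ j, ξ = ζ j} with hGenP
    set SP : Submodule ℂ (Module.Dual ℂ V₁) := Submodule.span ℂ GenP with hSP
    set SQ : Submodule ℂ (Module.Dual ℂ V₀) := SP.map A₂.dualMap with hSQ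
    have hgenP_mem : ∀ (ζ : ℕ → Module.Dual ℂ V₁), IsPencilChain A₁.dualMap A₂.dualMap ζ →
        ∀ j, ζ j ∈ SP := fun ζ hζ j => Submodule.subset_span ⟨ζ, hζ, j, rfl⟩
    have hSPA1 : ∀ ξ ∈ SP, A₁.dualMap ξ ∈ SQ := by
      intro ξ hξ
      induction hξ using Submodule.span_induction with
      | mem x hx =>
        obtain ⟨ζ, hζ, j, rfl⟩ := hx
        cases j with
        | zero =>
          rw [hζ.1]
          exact Submodule.zero_mem _
        | succ j =>
          rw [hζ.2.1 j, ← map_neg]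
          exact Submodule.mem_map_of_mem (Submodule.neg_mem _ (hgenP_mem ζ hζ j))
      | zero =>
        rw [map_zero]
        exact Submodule.zero_mem _
      | add x y hx hy ihx ihy =>
        rw [map_add]
        exact Submodule.add_mem _ ihx ihy
      | smul a x hx ihx =>
        rw [map_smul]
        exact Submodule.smul_mem _ a ihx
    have hSPC : ∀ (q : Fin n), ∀ ξ ∈ SP, ξ ∘ₗ A₂ ∘ₗ C q ∈ SP := by
      intro q ξ hξ
      induction hξ using Submodule.span_induction with
      | mem x hx =>
        obtain ⟨ζ, hζ, j, rfl⟩ := hx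
        by_cases hq : q.1 < n - 1
        · exact hgenP_mem _ (hM2 ζ hζ ⟨q.1, hq⟩) j
        · have hqn : q.1 = (n - 2) + 1 := by have := q.2; omega
          have hq' : n - 2 < n - 1 := by omega
          have hqeq : q = ⟨(⟨n - 2, hq'⟩ : Fin (n - 1)).1 + 1, hq1n ⟨n - 2, hq'⟩⟩ := by
            apply Fin.ext
            simpa using hqn
          rw [hqeq]
          cases j with
          | zero =>
            have hzero : ζ 0 ∘ₗ A₂ ∘ₗ C ⟨(⟨n - 2, hq'⟩ : Fin (n - 1)).1 + 1,
                hq1n ⟨n - 2, hq'⟩⟩ = 0 := by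
              apply LinearMap.ext
              intro y
              simp only [LinearMap.comp_apply, LinearMap.zero_apply]
              rw [hrel1 ⟨n - 2, hq'⟩ y]
              have := congrArg (fun (T : Module.Dual ℂ V₀) =>
                T (C ⟨(⟨n - 2, hq'⟩ : Fin (n - 1)).1, hq0n ⟨n - 2, hq'⟩⟩ y)) hζ.1
              simpa [LinearMap.dualMap_apply] using this
            rw [hzero]
            exact Submodule.zero_mem _
          | succ j =>
            have hneg : ζ (j + 1) ∘ₗ A₂ ∘ₗ C ⟨(⟨n - 2, hq'⟩ : Fin (n - 1)).1 + 1,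
                hq1n ⟨n - 2, hq'⟩⟩ =
                -(ζ j ∘ₗ A₂ ∘ₗ C ⟨(⟨n - 2, hq'⟩ : Fin (n - 1)).1,
                  hq0n ⟨n - 2, hq'⟩⟩) := by
              apply LinearMap.ext
              intro y
              simp only [LinearMap.comp_apply, LinearMap.neg_apply]
              rw [hrel1 ⟨n - 2, hq'⟩ y]
              have := congrArg (fun (T : Module.Dual ℂ V₀) =>
                T (C ⟨(⟨n - 2, hq'⟩ : Fin (n - 1)).1, hq0n ⟨n - 2, hq'⟩⟩ y)) (hζ.2.1 j)
              simpa [LinearMap.dualMap_apply] using this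
            rw [hneg]
            exact Submodule.neg_mem _ (hgenP_mem _ (hM2 ζ hζ ⟨n - 2, hq'⟩) j)
      | zero =>
        have hz : (0 : Module.Dual ℂ V₁) ∘ₗ A₂ ∘ₗ C q = 0 := by
          apply LinearMap.ext; intro y; simp
        rw [hz]
        exact Submodule.zero_mem _
      | add x y hx hy ihx ihy =>
        have ha : (x + y) ∘ₗ A₂ ∘ₗ C q = x ∘ₗ A₂ ∘ₗ C q + y ∘ₗ A₂ ∘ₗ C q := by
          apply LinearMap.ext; intro z; simp
        rw [ha]
        exact Submodule.add_mem _ ihx ihy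
      | smul a x hx ihx =>
        have hs : (a • x) ∘ₗ A₂ ∘ₗ C q = a • (x ∘ₗ A₂ ∘ₗ C q) := by
          apply LinearMap.ext; intro z; simp
        rw [hs]
        exact Submodule.smul_mem _ a ihx
    have hSPkill : ∀ ξ ∈ SP, ∀ (q : Fin (n - 1)) (w : W), ξ (A₂ (f q w)) = 0 := by
      intro ξ hξ
      induction hξ using Submodule.span_induction with
      | mem x hx =>
        obtain ⟨ζ, hζ, j, rfl⟩ := hx
        exact fun q w => hM1 ζ hζ q j w
      | zero => intro q w; rw [LinearMap.zero_apply]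
      | add x y hx hy ihx ihy =>
        intro q w
        rw [LinearMap.add_apply, ihx q w, ihy q w, add_zero]
      | smul a x hx ihx =>
        intro q w
        rw [LinearMap.smul_apply, ihx q w, smul_zero]
    set T₀ : Submodule ℂ V₀ := SQ.dualCoannihilator with hT₀
    set T₁ : Submodule ℂ V₁ := SP.dualCoannihilator with hT₁
    have hA1le : T₀.map A₁ ≤ T₁ := by
      rintro y ⟨x, hx, rfl⟩
      rw [Submodule.mem_dualCoannihilator]
      intro ξ hξ
      have h1 : A₁.dualMap ξ ∈ SQ := hSPA1 ξ hξ
      have h2 := (Submodule.mem_dualCoannihilator x).mp hx _ h1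
      simpa [LinearMap.dualMap_apply] using h2
    have hA2le : T₀.map A₂ ≤ T₁ := by
      rintro y ⟨x, hx, rfl⟩
      rw [Submodule.mem_dualCoannihilator]
      intro ξ hξ
      have h1 : A₂.dualMap ξ ∈ SQ := Submodule.mem_map_of_mem hξ
      have h2 := (Submodule.mem_dualCoannihilator x).mp hx _ h1
      simpa [LinearMap.dualMap_apply] using h2
    have hCle : ∀ q : Fin n, T₁.map (C q) ≤ T₀ := by
      intro q
      rintro y ⟨z, hz, rfl⟩
      rw [Submodule.mem_dualCoannihilator]
      intro ψ hψ
      obtain ⟨ξ, hξ, rfl⟩ := hψ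
      have h1 : ξ ∘ₗ A₂ ∘ₗ C q ∈ SP := hSPC q ξ hξ
      have h2 := (Submodule.mem_dualCoannihilator z).mp hz _ h1
      simpa [LinearMap.dualMap_apply] using h2
    have hfle : ∀ q, LinearMap.range (f q) ≤ T₀ := by
      intro q
      rintro y ⟨w, rfl⟩
      rw [Submodule.mem_dualCoannihilator]
      intro ψ hψ
      obtain ⟨ξ, hξ, rfl⟩ := hψ
      have := hSPkill ξ hξ q w
      simpa [LinearMap.dualMap_apply] using this
    -- dimension count
    obtain ⟨J, hJne, hJA⟩ := hζx.top hζxne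
    have hJSP : ζx J ∈ SP := hgenP_mem ζx hζx J
    set Φ : SP →ₗ[ℂ] Module.Dual ℂ V₀ := A₂.dualMap ∘ₗ SP.subtype with hΦ
    have hrangeΦ : LinearMap.range Φ = SQ := by
      rw [hΦ, LinearMap.range_comp, Submodule.range_subtype, hSQ]
    have hkerJ : (⟨ζx J, hJSP⟩ : SP) ∈ LinearMap.ker Φ := by
      rw [LinearMap.mem_ker, hΦ]
      simpa using hJA
    have hkerpos : 0 < finrank ℂ (LinearMap.ker Φ) := by
      have : Nontrivial (LinearMap.ker Φ) := by
        refine ⟨⟨⟨ζx J, hJSP⟩, hkerJ⟩, 0, fun h => hJne ?_⟩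
        have h1 : (⟨ζx J, hJSP⟩ : SP) = 0 := congrArg Subtype.val h
        exact congrArg Subtype.val h1
      exact Module.finrank_pos (R := ℂ) (M := LinearMap.ker Φ)
    have hrk := LinearMap.finrank_range_add_finrank_ker Φ
    rw [hrangeΦ] at hrk
    have hrank₀ : finrank ℂ SQ + finrank ℂ T₀ = c := by
      have := Subspace.finrank_add_finrank_dualCoannihilator_eq SQ
      rw [hV₀] at this
      exact this
    have hrank₁ : finrank ℂ SP + finrank ℂ T₁ = c := by
      have := Subspace.finrank_add_finrank_dualCoannihilator_eq SP
      rw [hV₁] at this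
      exact this
    have hineq := (hss T₀ T₁ hA1le hA2le hCle).2 hfle
    have hkey : (finrank ℂ T₁ : ℤ) + 1 ≤ (finrank ℂ T₀ : ℤ) := by
      have : finrank ℂ T₁ + 1 ≤ finrank ℂ T₀ := by omega
      exact_mod_cast this
    have h3 : (1 : ℤ) ≤ (c : ℤ) := by exact_mod_cast hc
    have h4 : (0 : ℤ) ≤ (finrank ℂ T₁ : ℤ) := Int.ofNat_nonneg _
    nlinarith [mul_le_mul_of_nonneg_left hkey (by linarith : (0 : ℤ) ≤ 2 * (c : ℤ))]
end

section
/- (Lemma 4.1) Let c ≥ 1 and let (A₁,A₂) be a (c,c)-dimensional representation of the Kronecker quiver Q_K with two arrows. Then (A₁,A₂) is θ_c-semistable if and only if the matrix pencil A₁ + λA₂ is regular, i.e., there exist ν₁, ν₂ ∈ ℂ such that ν₁A₁ + ν₂A₂ : V₀ → V₁ is bijective. -/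
open Module

-- injective implies bijective when finranks are equal
lemma aux_bij {V₀ V₁ : Type} [AddCommGroup V₀] [Module ℂ V₀] [FiniteDimensional ℂ V₀]
    [AddCommGroup V₁] [Module ℂ V₁] [FiniteDimensional ℂ V₁]
    (h : finrank ℂ V₀ = finrank ℂ V₁) (f : V₀ →ₗ[ℂ] V₁) (hf : Function.Injective f) :
    Function.Bijective f :=
  ⟨hf, (LinearMap.injective_iff_surjective_of_finrank_eq_finrank h).mp hf⟩

-- rank computation for a submodule containing a 1-dimensional kernel
lemma aux_rk {W W' : Type} [AddCommGroup W] [Module ℂ W] [FiniteDimensional ℂ W]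
    [AddCommGroup W'] [Module ℂ W'] [FiniteDimensional ℂ W']
    (f : W →ₗ[ℂ] W') (S r : Submodule ℂ W) (hker : LinearMap.ker f = r) (hrS : r ≤ S)
    (hr1 : finrank ℂ r = 1) : finrank ℂ S = finrank ℂ (S.map f) + 1 := by
  have h1 := LinearMap.finrank_range_add_finrank_ker (f ∘ₗ S.subtype)
  have h2 : LinearMap.range (f ∘ₗ S.subtype) = S.map f := by
    rw [LinearMap.range_comp, Submodule.range_subtype]
  have h3 : LinearMap.ker (f ∘ₗ S.subtype) = Submodule.comap S.subtype r := by
    rw [LinearMap.ker_comp, hker]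
  have h4 : finrank ℂ (Submodule.comap S.subtype r) = 1 := by
    rw [(Submodule.comapSubtypeEquivOfLe hrS).finrank_eq, hr1]
  rw [h2, h3, h4] at h1
  omega

-- genericity: the set of bad parameters is finite
lemma fin_bad {V₀ V₁ : Type} [AddCommGroup V₀] [Module ℂ V₀] [FiniteDimensional ℂ V₀]
    [AddCommGroup V₁] [Module ℂ V₁] [FiniteDimensional ℂ V₁]
    (h : finrank ℂ V₀ = finrank ℂ V₁) (A D : V₀ →ₗ[ℂ] V₁) (hD : Function.Bijective D) :
    {t : ℂ | ¬ Function.Bijective (t • A + D)}.Finite := by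
  set e := LinearEquiv.ofBijective D hD with he
  set C : Module.End ℂ V₀ := e.symm.toLinearMap ∘ₗ A with hC
  have hspec : (spectrum ℂ C).Finite := Module.End.finite_spectrum C
  have hinj : Function.Injective (fun t : ℂ => -t⁻¹) := by
    intro a b hab
    simpa using inv_injective (neg_injective hab)
  refine Set.Finite.subset (hspec.preimage hinj.injOn) ?_
  intro t ht
  simp only [Set.mem_setOf_eq] at ht
  have hni : ¬ Function.Injective (t • A + D) := fun hi => ht (aux_bij h _ hi)
  rw [← LinearMap.ker_eq_bot] at hni
  obtain ⟨w, hw, hw0⟩ := (Submodule.ne_bot_iff _).mp hni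
  have hweq : t • A w + D w = 0 := by simpa using hw
  have ht0 : t ≠ 0 := by
    rintro rfl
    apply hw0
    apply hD.injective
    simpa using hweq
  have hCw : C w = (-t⁻¹) • w := by
    have h1 : e.symm (t • A w + D w) = 0 := by rw [hweq]; simp
    have h2 : t • e.symm (A w) + w = 0 := by
      rw [map_add, map_smul] at h1
      have : e.symm (D w) = w := by
        have : e w = D w := rfl
        rw [← this, LinearEquiv.symm_apply_apply]
      rwa [this] at h1
    have : e.symm (A w) = (-t⁻¹) • w := by
      have := congrArg (fun x => t⁻¹ • x) h2
      simp only [smul_add, smul_smul, inv_mul_cancel₀ ht0, one_smul, smul_zero] at this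
      have h3 : e.symm (A w) = -(t⁻¹ • w) := by
        rw [← neg_eq_of_add_eq_zero_left this]
      rw [h3, neg_smul]
    simpa [hC] using this
  have : Module.End.HasEigenvalue C (-t⁻¹) :=
    Module.End.hasEigenvalue_of_hasEigenvector
      ⟨Module.End.mem_eigenspace_iff.mpr hCw, hw0⟩
  exact Module.End.hasEigenvalue_iff_mem_spectrum.mp this

-- key lemma (hard direction), by induction on the dimension
lemma key : ∀ (c : ℕ) (V₀ V₁ : Type) [AddCommGroup V₀] [Module ℂ V₀] [AddCommGroup V₁]
    [Module ℂ V₁] [FiniteDimensional ℂ V₀] [FiniteDimensional ℂ V₁],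
    finrank ℂ V₀ = c → finrank ℂ V₁ = c → ∀ A₁ A₂ : V₀ →ₗ[ℂ] V₁,
    (∀ S₀ : Submodule ℂ V₀, S₀ ≠ ⊥ →
      finrank ℂ S₀ ≤ finrank ℂ ↥(S₀.map A₁ ⊔ S₀.map A₂)) →
    ∃ ν₁ ν₂ : ℂ, Function.Bijective ⇑(ν₁ • A₁ + ν₂ • A₂) := by
  intro c
  induction c with
  | zero =>
    intro V₀ V₁ _ _ _ _ _ _ h₀ h₁ A₁ A₂ _
    have : Subsingleton V₀ := finrank_zero_iff.mp h₀
    have : Subsingleton V₁ := finrank_zero_iff.mp h₁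
    exact ⟨1, 1, fun a b _ => Subsingleton.elim a b, fun y => ⟨0, Subsingleton.elim _ _⟩⟩
  | succ n ih =>
    intro V₀ V₁ _ _ _ _ _ _ h₀ h₁ A₁ A₂ H
    by_cases hA₂ : Function.Bijective A₂
    · exact ⟨0, 1, by simpa using hA₂⟩
    -- A₂ is not injective, pick v ≠ 0 in its kernel
    have hni : ¬ Function.Injective A₂ := fun hi => hA₂ (aux_bij (h₀.trans h₁.symm) _ hi)
    rw [← LinearMap.ker_eq_bot] at hni
    obtain ⟨v, hv, hv0⟩ := (Submodule.ne_bot_iff _).mp hni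
    have hA₂v : A₂ v = 0 := hv
    -- A₁ v ≠ 0
    have hA₁v : A₁ v ≠ 0 := by
      intro h0
      have hne : (ℂ ∙ v) ≠ ⊥ := by
        simp [Submodule.span_singleton_eq_bot, hv0]
      have := H (ℂ ∙ v) hne
      rw [finrank_span_singleton hv0] at this
      have hmap : (ℂ ∙ v).map A₁ ⊔ (ℂ ∙ v).map A₂ = ⊥ := by
        rw [Submodule.map_span, Submodule.map_span]
        simp [h0, hA₂v]
      rw [hmap] at this
      simp at this
    set p : Submodule ℂ V₀ := ℂ ∙ v with hp
    set q : Submodule ℂ V₁ := ℂ ∙ (A₁ v) with hq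
    have hfp : finrank ℂ p = 1 := finrank_span_singleton hv0
    have hfq : finrank ℂ q = 1 := finrank_span_singleton hA₁v
    have hle₁ : p ≤ Submodule.comap A₁ q := by
      rw [hp, Submodule.span_le]
      intro x hx
      rw [Set.mem_singleton_iff] at hx
      subst hx
      exact Submodule.mem_comap.mpr (Submodule.mem_span_singleton_self _)
    have hle₂ : p ≤ Submodule.comap A₂ q := by
      rw [hp, Submodule.span_le]
      intro x hx
      rw [Set.mem_singleton_iff] at hx
      subst hx
      simp [Submodule.mem_comap, hA₂v]
    set B₁ := p.mapQ q A₁ hle₁ with hB₁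
    set B₂ := p.mapQ q A₂ hle₂ with hB₂
    have hq₀ : finrank ℂ (V₀ ⧸ p) = n := by
      have := p.finrank_quotient_add_finrank
      omega
    have hq₁ : finrank ℂ (V₁ ⧸ q) = n := by
      have := q.finrank_quotient_add_finrank
      omega
    -- the hypothesis descends to the quotient
    have H' : ∀ T : Submodule ℂ (V₀ ⧸ p), T ≠ ⊥ →
        finrank ℂ T ≤ finrank ℂ ↥(T.map B₁ ⊔ T.map B₂) := by
      intro T hT
      set S₀ := T.comap p.mkQ with hS₀
      have hpS : p ≤ S₀ := by
        intro x hx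
        have hx0 : p.mkQ x = 0 := by simpa using (Submodule.Quotient.mk_eq_zero p).mpr hx
        show p.mkQ x ∈ T
        rw [hx0]; exact T.zero_mem
      have hS₀T : S₀.map p.mkQ = T :=
        Submodule.map_comap_eq_of_surjective p.mkQ_surjective T
      have hS₀ne : S₀ ≠ ⊥ := by
        intro hb
        apply hT
        rw [← hS₀T, hb, Submodule.map_bot]
      have hdim₀ : finrank ℂ S₀ = finrank ℂ T + 1 := by
        have := aux_rk p.mkQ S₀ p p.ker_mkQ hpS hfp
        rwa [hS₀T] at this
      set U := S₀.map A₁ ⊔ S₀.map A₂ with hU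
      have hHS := H S₀ hS₀ne
      rw [← hU] at hHS
      have hqU : q ≤ U := by
        rw [hq, Submodule.span_le]
        intro x hx
        rw [Set.mem_singleton_iff] at hx
        subst hx
        exact Submodule.mem_sup_left ⟨v, hpS (Submodule.mem_span_singleton_self v), rfl⟩
      have hdim₁ : finrank ℂ U = finrank ℂ (U.map q.mkQ) + 1 :=
        aux_rk q.mkQ U q q.ker_mkQ hqU hfq
      have hUmap : U.map q.mkQ = T.map B₁ ⊔ T.map B₂ := by
        rw [hU, Submodule.map_sup, ← hS₀T, hB₁, hB₂]
        simp only [← Submodule.map_comp]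
        rw [Submodule.mapQ_mkQ, Submodule.mapQ_mkQ]
      rw [hUmap] at hdim₁
      omega
    obtain ⟨ν₁, ν₂, hbij⟩ := ih (V₀ ⧸ p) (V₁ ⧸ q) hq₀ hq₁ B₁ B₂ H'
    -- adjust to get a nonzero first coefficient
    set D := ν₁ • B₁ + ν₂ • B₂ with hD
    have hfin : {t : ℂ | ¬ Function.Bijective (t • B₁ + D)}.Finite :=
      fin_bad (hq₀.trans hq₁.symm) B₁ D hbij
    have hsub : {s : ℂ | ¬ Function.Bijective ⇑(s • B₁ + ν₂ • B₂)} ⊆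
        (fun t => t + ν₁) '' {t : ℂ | ¬ Function.Bijective ⇑(t • B₁ + D)} := by
      intro s hs
      refine ⟨s - ν₁, ?_, by ring⟩
      simp only [Set.mem_setOf_eq]
      have heq : (s - ν₁) • B₁ + D = s • B₁ + ν₂ • B₂ := by
        rw [hD]; module
      rw [heq]; exact hs
    have hfin2 : {s : ℂ | ¬ Function.Bijective ⇑(s • B₁ + ν₂ • B₂)}.Finite :=
      (hfin.image _).subset hsub
    obtain ⟨s, hsgood⟩ := ((hfin2.union (Set.finite_singleton 0)).infinite_compl).nonempty
    simp only [Set.mem_compl_iff, Set.mem_union, Set.mem_singleton_iff, Set.mem_setOf_eq,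
      not_or] at hsgood
    obtain ⟨hsbij', hs0⟩ := hsgood
    have hsbij : Function.Bijective ⇑(s • B₁ + ν₂ • B₂) := not_not.mp hsbij'
    -- lift back
    refine ⟨s, ν₂, ?_⟩
    have hinj : Function.Injective ⇑(s • A₁ + ν₂ • A₂) := by
      rw [← LinearMap.ker_eq_bot, Submodule.eq_bot_iff]
      intro w hw
      have hw0 : (s • A₁ + ν₂ • A₂) w = 0 := LinearMap.mem_ker.mp hw
      have h1 : (s • B₁ + ν₂ • B₂) (p.mkQ w) = 0 := by
        have hcomm : (s • B₁ + ν₂ • B₂) (p.mkQ w) = q.mkQ ((s • A₁ + ν₂ • A₂) w) := by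
          simp [hB₁, hB₂, Submodule.mapQ_apply, Submodule.mkQ_apply, map_add, map_smul]
        rw [hcomm, hw0, map_zero]
      have h2 : p.mkQ w = 0 := by
        have := hsbij.injective (a₁ := p.mkQ w) (a₂ := 0) (by rw [h1, map_zero])
        exact this
      have hwp : w ∈ p := (Submodule.Quotient.mk_eq_zero p).mp (by simpa using h2)
      obtain ⟨a, ha⟩ := Submodule.mem_span_singleton.mp hwp
      have heval : (s • A₁ + ν₂ • A₂) w = (a * s) • A₁ v := by
        rw [← ha]
        simp [map_smul, hA₂v, smul_smul, mul_comm]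
      rw [heval] at hw0
      have ha0 : a = 0 := by
        rcases smul_eq_zero.mp hw0 with h | h
        · rcases mul_eq_zero.mp h with h' | h'
          · exact h'
          · exact absurd h' hs0
        · exact absurd h hA₁v
      rw [← ha, ha0, zero_smul]
    exact aux_bij (h₀.trans h₁.symm) _ hinj

/-- (Lemma 4.1) A (c,c)-dimensional representation (A₁,A₂) of the 2-Kronecker quiver
is θ_c-semistable if and only if the matrix pencil A₁ + λA₂ is regular. -/
theorem stmt_4 (c : ℕ) (hc : 1 ≤ c)
    (V₀ V₁ : Type) [AddCommGroup V₀] [Module ℂ V₀] [FiniteDimensional ℂ V₀]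
    [AddCommGroup V₁] [Module ℂ V₁] [FiniteDimensional ℂ V₁]
    (hV₀ : finrank ℂ V₀ = c) (hV₁ : finrank ℂ V₁ = c)
    (A₁ A₂ : V₀ →ₗ[ℂ] V₁) :
    -- θ_c-semistability
    (∀ (S₀ : Submodule ℂ V₀) (S₁ : Submodule ℂ V₁),
      S₀.map A₁ ≤ S₁ → S₀.map A₂ ≤ S₁ →
      ¬(S₀ = ⊥ ∧ S₁ = ⊥) → ¬(S₀ = ⊤ ∧ S₁ = ⊤) →
      ((2 * c : ℝ) * (finrank ℂ S₀ : ℝ) + (1 - 2 * c) * (finrank ℂ S₁ : ℝ)) /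
        ((finrank ℂ S₀ : ℝ) + (finrank ℂ S₁ : ℝ)) ≤ 1 / 2)
    ↔
    -- regularity of the pencil A₁ + λA₂
    (∃ ν₁ ν₂ : ℂ, Function.Bijective (ν₁ • A₁ + ν₂ • A₂)) := by
  have hc' : (1 : ℝ) ≤ (c : ℝ) := by exact_mod_cast hc
  constructor
  · intro hss
    apply key c V₀ V₁ hV₀ hV₁ A₁ A₂
    intro S₀ hS₀
    by_cases htop : S₀.map A₁ ⊔ S₀.map A₂ = ⊤
    · rw [htop]
      calc finrank ℂ S₀ ≤ finrank ℂ V₁ := by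
            rw [hV₁, ← hV₀]; exact S₀.finrank_le
        _ = finrank ℂ (⊤ : Submodule ℂ V₁) := (finrank_top ℂ V₁).symm
    · have h := hss S₀ (S₀.map A₁ ⊔ S₀.map A₂) le_sup_left le_sup_right
        (fun h => hS₀ h.1) (fun h => htop h.2)
      set a := (finrank ℂ S₀ : ℝ) with hadef
      set b := (finrank ℂ ↥(S₀.map A₁ ⊔ S₀.map A₂) : ℝ) with hbdef
      have ha : (1:ℝ) ≤ a := by
        have h0 : finrank ℂ S₀ ≠ 0 := fun hz => hS₀ (Submodule.finrank_eq_zero.mp hz)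
        have : 1 ≤ finrank ℂ S₀ := Nat.one_le_iff_ne_zero.mpr h0
        rw [hadef]; exact_mod_cast this
      have hb : (0:ℝ) ≤ b := by rw [hbdef]; positivity
      have habpos : 0 < a + b := by linarith
      rw [div_le_iff₀ habpos] at h
      have hab : a ≤ b := by nlinarith
      have : (finrank ℂ S₀ : ℝ) ≤ (finrank ℂ ↥(S₀.map A₁ ⊔ S₀.map A₂) : ℝ) := hab
      exact_mod_cast this
  · rintro ⟨ν₁, ν₂, hbij⟩ S₀ S₁ h1 h2 hbot htop
    set B := ν₁ • A₁ + ν₂ • A₂ with hB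
    have hmap : S₀.map B ≤ S₁ := by
      intro y hy
      obtain ⟨x, hx, rfl⟩ := hy
      have hx1 : A₁ x ∈ S₁ := h1 ⟨x, hx, rfl⟩
      have hx2 : A₂ x ∈ S₁ := h2 ⟨x, hx, rfl⟩
      have hBx : B x = ν₁ • A₁ x + ν₂ • A₂ x := by simp [hB]
      rw [hBx]
      exact S₁.add_mem (S₁.smul_mem _ hx1) (S₁.smul_mem _ hx2)
    have hd : finrank ℂ S₀ ≤ finrank ℂ S₁ := by
      calc finrank ℂ S₀ = finrank ℂ (S₀.map B) :=
            (Submodule.equivMapOfInjective B hbij.injective S₀).finrank_eq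
        _ ≤ finrank ℂ S₁ := Submodule.finrank_mono hmap
    have hne : finrank ℂ S₀ ≠ 0 ∨ finrank ℂ S₁ ≠ 0 := by
      by_contra hcon
      push_neg at hcon
      exact hbot ⟨Submodule.finrank_eq_zero.mp hcon.1, Submodule.finrank_eq_zero.mp hcon.2⟩
    have hpos : (0:ℝ) < (finrank ℂ S₀ : ℝ) + (finrank ℂ S₁ : ℝ) := by
      have : 0 < finrank ℂ S₀ + finrank ℂ S₁ := by rcases hne with h | h <;> omega
      exact_mod_cast this
    rw [div_le_iff₀ hpos]
    have hd' : (finrank ℂ S₀ : ℝ) ≤ (finrank ℂ S₁ : ℝ) := by exact_mod_cast hd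
    nlinarith [mul_nonneg (sub_nonneg.mpr hc') (sub_nonneg.mpr hd'),
      (Nat.cast_nonneg (finrank ℂ S₀) : (0:ℝ) ≤ finrank ℂ S₀)]
end

section
/- (Regularity criterion for pencils, used via [bblr, Lemma 4.10] in the proof of Lemma 4.1) Let A₁, A₂ : V₀ → V₁ be ℂ-linear maps between c-dimensional ℂ-vector spaces. Then the matrix pencil A₁ + λA₂ is regular — i.e., there exist ν₁, ν₂ ∈ ℂ such that ν₁A₁ + ν₂A₂ is bijective — if and only if for every subspace S ⊆ V₀ one has dim(A₁(S) + A₂(S)) ≥ dim S. -/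
open Module Polynomial Matrix

/-- (Regularity criterion for pencils, [bblr, Lemma 4.10]) For linear maps
A₁, A₂ : V₀ → V₁ between c-dimensional ℂ-vector spaces, the pencil A₁ + λA₂ is regular
iff dim(A₁(S) + A₂(S)) ≥ dim S for every subspace S ⊆ V₀. -/
theorem stmt_8 (c : ℕ) (hc : 1 ≤ c)
    (V₀ V₁ : Type) [AddCommGroup V₀] [Module ℂ V₀] [FiniteDimensional ℂ V₀]
    [AddCommGroup V₁] [Module ℂ V₁] [FiniteDimensional ℂ V₁]
    (hV₀ : finrank ℂ V₀ = c) (hV₁ : finrank ℂ V₁ = c)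
    (A₁ A₂ : V₀ →ₗ[ℂ] V₁) :
    (∃ ν₁ ν₂ : ℂ, Function.Bijective (ν₁ • A₁ + ν₂ • A₂))
    ↔
    (∀ S : Submodule ℂ V₀, finrank ℂ S ≤ finrank ℂ (S.map A₁ ⊔ S.map A₂ : Submodule ℂ V₁)) := by
  classical
  constructor
  · rintro ⟨ν₁, ν₂, hbij⟩ S
    set f := ν₁ • A₁ + ν₂ • A₂ with hf
    have hmap : S.map f ≤ S.map A₁ ⊔ S.map A₂ := by
      rintro _ ⟨x, hx, rfl⟩
      have : f x = ν₁ • A₁ x + ν₂ • A₂ x := by simp [hf]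
      rw [this]
      exact Submodule.add_mem _
        (Submodule.mem_sup_left (Submodule.smul_mem _ _ ⟨x, hx, rfl⟩))
        (Submodule.mem_sup_right (Submodule.smul_mem _ _ ⟨x, hx, rfl⟩))
    have heq : finrank ℂ (S.map f) = finrank ℂ S :=
      ((Submodule.equivMapOfInjective f hbij.injective S).symm).finrank_eq
    calc finrank ℂ S = finrank ℂ (S.map f) := heq.symm
      _ ≤ _ := Submodule.finrank_mono hmap
  · intro hS
    by_contra hno
    push_neg at hno
    -- bases and matrices
    let b₀ : Basis (Fin c) ℂ V₀ := Module.finBasisOfFinrankEq ℂ V₀ hV₀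
    let b₁ : Basis (Fin c) ℂ V₁ := Module.finBasisOfFinrankEq ℂ V₁ hV₁
    set M₁ := LinearMap.toMatrix b₀ b₁ A₁ with hM₁
    set M₂ := LinearMap.toMatrix b₀ b₁ A₂ with hM₂
    have hdet : ∀ a : ℂ, (M₁ + a • M₂).det = 0 := by
      intro a
      by_contra hd
      have hu : IsUnit (LinearMap.toMatrix b₀ b₁ ((1:ℂ) • A₁ + a • A₂)).det := by
        have h : LinearMap.toMatrix b₀ b₁ ((1:ℂ) • A₁ + a • A₂) = M₁ + a • M₂ := by
          simp only [map_add, LinearEquiv.map_smul, hM₁, hM₂, one_smul]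
        rw [h]
        exact isUnit_iff_ne_zero.2 hd
      exact hno 1 a (LinearEquiv.ofIsUnitDet hu).bijective
    -- polynomial matrix
    set N : Matrix (Fin c) (Fin c) ℂ[X] :=
      M₁.map Polynomial.C + (X : ℂ[X]) • M₂.map Polynomial.C with hN
    have hNentry : ∀ r j, N r j = Polynomial.C (M₁ r j) + X * Polynomial.C (M₂ r j) := by
      intro r j
      simp [hN, Matrix.add_apply, Matrix.smul_apply, Matrix.map_apply, smul_eq_mul]
    have hNdet : N.det = 0 := by
      apply Polynomial.zero_of_eval_zero
      intro a
      have h1 : (Polynomial.evalRingHom a) N.det = (N.map (Polynomial.evalRingHom a)).det :=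
        RingHom.map_det _ _
      have h2 : N.map (Polynomial.evalRingHom a) = M₁ + a • M₂ := by
        ext i j
        simp only [Matrix.map_apply, hNentry, coe_evalRingHom, eval_add, eval_mul, eval_C,
          eval_X, Matrix.add_apply, Matrix.smul_apply, smul_eq_mul]
      rw [h2, hdet a] at h1
      exact h1
    obtain ⟨v, hv, hNv⟩ := Matrix.exists_mulVec_eq_zero_iff.2 hNdet
    -- coefficient vectors
    have hex : ∃ m, ∃ j, (v j).coeff m ≠ 0 := by
      obtain ⟨j, hj⟩ := Function.ne_iff.1 hv
      obtain ⟨m, hm⟩ : ∃ m, (v j).coeff m ≠ 0 := by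
        by_contra hcon
        push_neg at hcon
        exact hj (Polynomial.ext fun n => hcon n)
      exact ⟨m, j, hm⟩
    set k := Nat.find hex with hk
    obtain ⟨jk, hjk⟩ := Nat.find_spec hex
    have hklt : ∀ m < k, ∀ j, (v j).coeff m = 0 := by
      intro m hm j
      by_contra hcon
      exact (Nat.find_min hex hm) ⟨j, hcon⟩
    set w : ℕ → (Fin c → ℂ) := fun i j => (v j).coeff i with hw
    have hwk : w k ≠ 0 := by
      intro h0
      exact hjk (congrFun h0 jk)
    -- row equations
    have hrow : ∀ r : Fin c,
        (∑ j, Polynomial.C (M₁ r j) * v j) + X * (∑ j, Polynomial.C (M₂ r j) * v j) = 0 := by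
      intro r
      have h := congrFun hNv r
      have h' : ∑ j, N r j * v j = 0 := by
        simpa [Matrix.mulVec, dotProduct] using h
      calc (∑ j, Polynomial.C (M₁ r j) * v j) + X * (∑ j, Polynomial.C (M₂ r j) * v j)
          = ∑ j, (Polynomial.C (M₁ r j) * v j + X * (Polynomial.C (M₂ r j) * v j)) := by
            rw [Finset.sum_add_distrib, Finset.mul_sum]
        _ = ∑ j, N r j * v j := by
            refine Finset.sum_congr rfl fun j _ => ?_
            rw [hNentry]; ring
        _ = 0 := h'
    have hP : ∀ r i, (∑ j, Polynomial.C (M₁ r j) * v j).coeff i = (M₁ *ᵥ w i) r := by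
      intro r i
      simp [Polynomial.finset_sum_coeff, Polynomial.coeff_C_mul, Matrix.mulVec,
        dotProduct, hw]
    have hQ : ∀ r i, (∑ j, Polynomial.C (M₂ r j) * v j).coeff i = (M₂ *ᵥ w i) r := by
      intro r i
      simp [Polynomial.finset_sum_coeff, Polynomial.coeff_C_mul, Matrix.mulVec,
        dotProduct, hw]
    have h0 : M₁ *ᵥ w 0 = 0 := by
      funext r
      have h := congrArg (fun p => p.coeff 0) (hrow r)
      simp only [Polynomial.coeff_add, Polynomial.coeff_zero, Polynomial.mul_coeff_zero,
        Polynomial.coeff_X_zero, zero_mul, add_zero] at h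
      rw [hP] at h
      simpa using h
    have hrec : ∀ i, M₁ *ᵥ w (i+1) + M₂ *ᵥ w i = 0 := by
      intro i
      funext r
      have h := congrArg (fun p => p.coeff (i+1)) (hrow r)
      simp only [Polynomial.coeff_add, Polynomial.coeff_zero, Polynomial.coeff_X_mul] at h
      rw [hP, hQ] at h
      simpa using h
    -- back to linear maps
    have hbridge : ∀ (B : V₀ →ₗ[ℂ] V₁) (x : Fin c → ℂ),
        B (b₀.equivFun.symm x) = b₁.equivFun.symm ((LinearMap.toMatrix b₀ b₁ B) *ᵥ x) := by
      intro B x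
      apply b₁.equivFun.injective
      rw [LinearEquiv.apply_symm_apply]
      funext r
      rw [Basis.equivFun_apply, ← LinearMap.toMatrix_mulVec_repr b₀ b₁]
      congr 1
      funext j
      rw [← Basis.equivFun_apply, LinearEquiv.apply_symm_apply]
    set s : ℕ → V₀ := fun i => b₀.equivFun.symm (w i) with hs
    have hwzero : ∀ m < k, w m = 0 := by
      intro m hm
      funext j
      exact hklt m hm j
    have hA1sk : A₁ (s k) = 0 := by
      rw [hs, hbridge, ← hM₁]
      rcases Nat.eq_zero_or_pos k with hk0 | hk0
      · rw [hk0, h0]; simp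
      · obtain ⟨m, hm⟩ : ∃ m, k = m + 1 := ⟨k - 1, by omega⟩
        rw [hm]
        have hkm : w m = 0 := hwzero m (by omega)
        have h := hrec m
        rw [hkm] at h
        simp only [Matrix.mulVec_zero, add_zero] at h
        rw [h]; simp
    have hA2s : ∀ i, A₂ (s i) = - A₁ (s (i+1)) := by
      intro i
      rw [hs, hbridge, hbridge, ← hM₁, ← hM₂]
      have := hrec i
      have h2 : M₂ *ᵥ w i = -(M₁ *ᵥ w (i+1)) := by
        rw [eq_neg_iff_add_eq_zero, add_comm]; exact this
      rw [h2, map_neg]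
    set S : Submodule ℂ V₀ := Submodule.span ℂ (Set.range s) with hSdef
    have hsk_mem : s k ∈ S := Submodule.subset_span ⟨k, rfl⟩
    have hsk_ne : s k ≠ 0 := by
      intro h
      apply hwk
      have := congrArg b₀.equivFun h
      rwa [LinearEquiv.apply_symm_apply, map_zero] at this
    -- A₂ S ≤ A₁ S
    have hsub : S.map A₂ ≤ S.map A₁ := by
      rw [hSdef, Submodule.map_span, Submodule.map_span]
      apply Submodule.span_le.2
      rintro _ ⟨_, ⟨i, rfl⟩, rfl⟩
      rw [hA2s i]
      exact Submodule.neg_mem _ (Submodule.subset_span ⟨s (i+1), ⟨i+1, rfl⟩, rfl⟩)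
    have hsup : S.map A₁ ⊔ S.map A₂ = S.map A₁ := sup_eq_left.2 hsub
    -- rank-nullity
    have hker : 0 < finrank ℂ (LinearMap.ker (A₁.domRestrict S)) := by
      rw [Module.finrank_pos_iff_exists_ne_zero]
      refine ⟨⟨⟨s k, hsk_mem⟩, ?_⟩, ?_⟩
      · rw [LinearMap.mem_ker, LinearMap.domRestrict_apply]; exact hA1sk
      · intro h
        rw [Submodule.mk_eq_zero, Submodule.mk_eq_zero] at h
        exact hsk_ne h
    have hrank := LinearMap.finrank_range_add_finrank_ker (A₁.domRestrict S)
    rw [LinearMap.range_domRestrict] at hrank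
    have hlt : finrank ℂ (S.map A₁) < finrank ℂ S := by omega
    have := hS S
    rw [hsup] at this
    omega
end

section
/- (Key inclusion (3.16) in the proof of Proposition 3.5) Let (A₁,A₂;B₁,…,B_{n−1};D₂,…,D_n;e;f₁,…,f_{n−1}) be a (c,c)-dimensional framed representation of Λ'_n, and let v₀, …, v_ε ∈ V₀ satisfy A₁v₀ = 0, A₁v_α = A₂v_{α−1} for α = 1, …, ε, A₂v_ε = 0, and e(v₀) = 1. Define subspaces U₀ = span(v₀,…,v_ε) ⊆ V₀, U_{2k+1} = A₁(U_{2k}) + A₂(U_{2k}) ⊆ V₁ for k ≥ 0, and U_{2k} = Σ_{q=1}^{n−1} B_q(U_{2k−1}) + Σ_{q=2}^{n} D_q(U_{2k−1}) ⊆ V₀ for k ≥ 1. Then U₁ = A₁(U₀), and for every k ≥ 1 one has U_{2k+1} ⊆ Σ_{l=1}^{k} A₁(U_{2l}). -/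
open Module

/-- (Key inclusion (3.16) in the proof of Proposition 3.5) Given a (c,c)-dimensional
framed representation of Λ'_n (with W identified with ℂ) and vectors v₀,…,v_ε with
A₁v₀ = 0, A₁v_α = A₂v_{α−1}, A₂v_ε = 0 and e(v₀) = 1, the subspaces
U₀ = span(v₀,…,v_ε), U_{2k+1} = A₁(U_{2k}) + A₂(U_{2k}), and
U_{2k} = Σ_q B_q(U_{2k−1}) + Σ_q D_q(U_{2k−1}) satisfy U₁ = A₁(U₀) and
U_{2k+1} ⊆ Σ_{l=1}^{k} A₁(U_{2l}) for every k ≥ 1. -/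
theorem stmt_11 (n c : ℕ) (hn : 2 ≤ n) (hc : 1 ≤ c)
    (V₀ V₁ : Type) [AddCommGroup V₀] [Module ℂ V₀] [FiniteDimensional ℂ V₀]
    [AddCommGroup V₁] [Module ℂ V₁] [FiniteDimensional ℂ V₁]
    (hV₀ : finrank ℂ V₀ = c) (hV₁ : finrank ℂ V₁ = c)
    (A₁ A₂ : V₀ →ₗ[ℂ] V₁)
    (B D : Fin (n - 1) → (V₁ →ₗ[ℂ] V₀))
    (e : V₀ →ₗ[ℂ] ℂ) (f : Fin (n - 1) → (ℂ →ₗ[ℂ] V₀))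
    (hQ1'a : ∀ q, A₂ ∘ₗ D q = A₁ ∘ₗ B q)
    (hQ1'b : ∀ q, D q ∘ₗ A₂ = B q ∘ₗ A₁ + f q ∘ₗ e)
    (ε : ℕ) (v : Fin (ε + 1) → V₀)
    (hv0 : A₁ (v 0) = 0)
    (hvrec : ∀ α : Fin ε, A₁ (v α.succ) = A₂ (v α.castSucc))
    (hvlast : A₂ (v (Fin.last ε)) = 0)
    (hev0 : e (v 0) = 1)
    -- the subspaces U_j, j ≥ 0, with Ueven k = U_{2k} and Uodd k = U_{2k+1}
    (Ueven : ℕ → Submodule ℂ V₀) (Uodd : ℕ → Submodule ℂ V₁)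
    (hU0 : Ueven 0 = Submodule.span ℂ (Set.range v))
    (hUodd : ∀ k, Uodd k = (Ueven k).map A₁ ⊔ (Ueven k).map A₂)
    (hUeven : ∀ k, Ueven (k + 1) =
      (⨆ q : Fin (n - 1), (Uodd k).map (B q)) ⊔
      (⨆ q : Fin (n - 1), (Uodd k).map (D q))) :
    Uodd 0 = (Ueven 0).map A₁ ∧
    ∀ k : ℕ, 1 ≤ k → Uodd k ≤ ⨆ l ∈ Finset.Icc 1 k, (Ueven l).map A₁ := by
  -- vectors v i lie in Ueven 0
  have hv_mem : ∀ i, v i ∈ Ueven 0 := fun i => hU0 ▸ Submodule.subset_span ⟨i, rfl⟩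
  -- A₂(U₀) ≤ A₁(U₀)
  have hA2U0 : (Ueven 0).map A₂ ≤ (Ueven 0).map A₁ := by
    conv_lhs => rw [hU0]
    rw [Submodule.map_span, Submodule.span_le]
    rintro _ ⟨_, ⟨i, rfl⟩, rfl⟩
    by_cases h : (i : ℕ) < ε
    · have h1 := hvrec ⟨(i : ℕ), h⟩
      have h2 : (⟨(i : ℕ), h⟩ : Fin ε).castSucc = i := Fin.ext rfl
      rw [h2] at h1
      rw [← h1]
      exact Submodule.mem_map_of_mem (hv_mem _)
    · have hi : i = Fin.last ε :=
        Fin.ext (Nat.le_antisymm (Nat.lt_succ_iff.mp i.isLt) (not_lt.mp h))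
      rw [hi, hvlast]
      exact Submodule.zero_mem _
  have hU1 : Uodd 0 = (Ueven 0).map A₁ := by
    rw [hUodd 0]; exact sup_eq_left.mpr hA2U0
  -- the constant vector A₂ (f q 1) lies in A₁(Ueven 1)
  have hA2v0 : A₂ (v 0) ∈ Uodd 0 := by
    rw [hUodd 0]
    exact Submodule.mem_sup_right (Submodule.mem_map_of_mem (hv_mem 0))
  have hconst : ∀ q, A₂ (f q 1) ∈ (Ueven 1).map A₁ := by
    intro q
    have h1 : f q 1 = D q (A₂ (v 0)) := by
      have h := LinearMap.congr_fun (hQ1'b q) (v 0)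
      simp only [LinearMap.comp_apply, LinearMap.add_apply, hv0, hev0, map_zero,
        zero_add] at h
      exact h.symm
    have h2 : A₂ (D q (A₂ (v 0))) = A₁ (B q (A₂ (v 0))) :=
      LinearMap.congr_fun (hQ1'a q) (A₂ (v 0))
    have h4 : B q (A₂ (v 0)) ∈ Ueven 1 := by
      rw [hUeven 0]
      exact Submodule.mem_sup_left
        (Submodule.mem_iSup_of_mem q (Submodule.mem_map_of_mem hA2v0))
    rw [h1, h2]
    exact Submodule.mem_map_of_mem h4
  -- key pointwise computation
  have hAB : ∀ (q : Fin (n - 1)) (l : ℕ) (y : V₀), y ∈ Ueven l →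
      A₂ (B q (A₁ y)) ∈ (Ueven (l + 1)).map A₁ ⊔ (Ueven 1).map A₁ := by
    intro q l y hy
    have hb : B q (A₁ y) = D q (A₂ y) - e y • f q 1 := by
      have h := LinearMap.congr_fun (hQ1'b q) y
      simp only [LinearMap.comp_apply, LinearMap.add_apply] at h
      have hf : f q (e y) = e y • f q 1 := by
        rw [← map_smul, smul_eq_mul, mul_one]
      rw [hf] at h
      exact eq_sub_of_add_eq h.symm
    have hDA : A₂ (D q (A₂ y)) = A₁ (B q (A₂ y)) :=
      LinearMap.congr_fun (hQ1'a q) (A₂ y)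
    have hm1 : A₂ y ∈ Uodd l := by
      rw [hUodd l]
      exact Submodule.mem_sup_right (Submodule.mem_map_of_mem hy)
    have hm2 : B q (A₂ y) ∈ Ueven (l + 1) := by
      rw [hUeven l]
      exact Submodule.mem_sup_left
        (Submodule.mem_iSup_of_mem q (Submodule.mem_map_of_mem hm1))
    rw [hb, map_sub, map_smul, hDA]
    exact Submodule.sub_mem _
      (Submodule.mem_sup_left (Submodule.mem_map_of_mem hm2))
      (Submodule.smul_mem _ _ (Submodule.mem_sup_right (hconst q)))
  -- the main step: if Uodd m is controlled, then A₂(Ueven (m+1)) lands in the target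
  have hkey : ∀ m : ℕ, Uodd m ≤ (⨆ l ∈ Finset.Icc 0 m, (Ueven l).map A₁) →
      (Ueven (m + 1)).map A₂ ≤ ⨆ l ∈ Finset.Icc 1 (m + 1), (Ueven l).map A₁ := by
    intro m hm
    rw [hUeven m, Submodule.map_sup, Submodule.map_iSup, Submodule.map_iSup]
    apply sup_le
    · -- B part
      apply iSup_le
      intro q
      have step1 : ((Uodd m).map (B q)).map A₂ ≤
          ((⨆ l ∈ Finset.Icc 0 m, (Ueven l).map A₁).map (B q)).map A₂ :=
        Submodule.map_mono (Submodule.map_mono hm)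
      refine step1.trans ?_
      rw [Submodule.map_iSup, Submodule.map_iSup]
      apply iSup_le
      intro l
      rw [Submodule.map_iSup, Submodule.map_iSup]
      apply iSup_le
      intro hl
      rintro _ ⟨_, ⟨_, ⟨y, hy, rfl⟩, rfl⟩, rfl⟩
      have hmem := hAB q l y hy
      have hl1 : l + 1 ∈ Finset.Icc 1 (m + 1) := by
        simp only [Finset.mem_Icc] at hl ⊢; omega
      have h1m : 1 ∈ Finset.Icc 1 (m + 1) := by
        simp only [Finset.mem_Icc]; omega
      have hle : (Ueven (l + 1)).map A₁ ⊔ (Ueven 1).map A₁ ≤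
          ⨆ l ∈ Finset.Icc 1 (m + 1), (Ueven l).map A₁ :=
        sup_le (le_iSup₂_of_le (l + 1) hl1 le_rfl) (le_iSup₂_of_le 1 h1m le_rfl)
      exact hle hmem
    · -- D part
      apply iSup_le
      intro q
      have hD : ((Uodd m).map (D q)).map A₂ = ((Uodd m).map (B q)).map A₁ := by
        rw [← Submodule.map_comp, ← Submodule.map_comp, hQ1'a q]
      rw [hD]
      have hsub : (Uodd m).map (B q) ≤ Ueven (m + 1) := by
        rw [hUeven m]
        exact le_trans (le_iSup (fun q => (Uodd m).map (B q)) q) le_sup_left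
      refine le_iSup₂_of_le (m + 1) ?_ (Submodule.map_mono hsub)
      simp only [Finset.mem_Icc]; omega
  -- the auxiliary bound including l = 0
  have hQ : ∀ k, Uodd k ≤ ⨆ l ∈ Finset.Icc 0 k, (Ueven l).map A₁ := by
    intro k
    induction k with
    | zero =>
      rw [hU1]
      exact le_iSup₂_of_le 0 (by simp) le_rfl
    | succ m ih =>
      rw [hUodd (m + 1)]
      apply sup_le
      · exact le_iSup₂_of_le (m + 1) (by simp) le_rfl
      · refine (hkey m ih).trans ?_
        exact biSup_mono fun l hl => by
          simp only [Finset.mem_Icc] at hl ⊢; omega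
  refine ⟨hU1, ?_⟩
  intro k hk
  obtain ⟨m, rfl⟩ : ∃ m, k = m + 1 := ⟨k - 1, (Nat.succ_pred_eq_of_pos hk).symm⟩
  rw [hUodd (m + 1)]
  apply sup_le
  · exact le_iSup₂_of_le (m + 1) (by simp) le_rfl
  · exact hkey m (hQ m)
end
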